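/- arXiv:0904.1984 — 5 statements merged into one kernel-verified Lean document; each statement's English description precedes it below -/
import Mathlib

section
/- Let $q:[a,\infty)\to\mathbb{R}$ be a continuously differentiable function with $q(a)=0$, $q'(a)>0$, $q(t)>0$ for all $t>a$, and $\lim_{t\to\infty} q(t)/t^2 = \varepsilon$ for some $\varepsilon>0$. Then $F:[a,\infty)\to\mathbb{R}$ defined by $F(t)=\int_a^t q(\tau)^{-1/2}\,d\tau$ is well defined (the improper integral converges at $a$), strictly increasing, and $\lim_{t\to\infty}F(t)=\infty$. Moreover, if $G:[0,\infty)\to[a,\infty)$ is the inverse function of $F$, then the even extension $g:\mathbb{R}\to[a,\infty)$ given by $g(t)=G(t)$ for $t\ge 0$ and $g(t)=G(-t)$ for $t<0$ is differentiable and satisfies $(g'(t))^2 = q(g(t))$ for all $t\in\mathbb{R}$. -/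
open Filter MeasureTheory

/-- Lemma 2.2 of the paper: if `q ∈ C¹([a,∞))` vanishes at `a` with `q'(a) > 0`,
is positive on `(a,∞)` and `q(t)/t² → ε > 0`, then `F(t) = ∫_a^t q(τ)^{-1/2} dτ`
is well defined, strictly increasing and tends to `∞`; moreover the even
extension `g` of the inverse `G` of `F` solves `(g')² = q ∘ g` on all of `ℝ`. -/
theorem stmt_1 (a ε : ℝ) (hε : 0 < ε) (q : ℝ → ℝ)
    (hq : ContDiffOn ℝ 1 q (Set.Ici a))
    (hqa : q a = 0)
    (hq'a : 0 < derivWithin q (Set.Ici a) a)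
    (hqpos : ∀ t, a < t → 0 < q t)
    (hlim : Tendsto (fun t => q t / t ^ 2) atTop (nhds ε))
    (F : ℝ → ℝ)
    (hF : ∀ t, F t = ∫ τ in a..t, 1 / Real.sqrt (q τ)) :
    (∀ t, a ≤ t → IntegrableOn (fun τ => 1 / Real.sqrt (q τ)) (Set.Ioc a t)) ∧
    StrictMonoOn F (Set.Ici a) ∧
    Tendsto F atTop atTop ∧
    ∀ G : ℝ → ℝ,
      (∀ t ∈ Set.Ici a, G (F t) = t) →
      (∀ s ∈ Set.Ici (0 : ℝ), F (G s) = s) →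
      (∀ s ∈ Set.Ici (0 : ℝ), G s ∈ Set.Ici a) →
      ∀ g : ℝ → ℝ,
        (∀ t, 0 ≤ t → g t = G t) →
        (∀ t, t < 0 → g t = G (-t)) →
        Differentiable ℝ g ∧ ∀ t, deriv g t ^ 2 = q (g t) := by
  set c := derivWithin q (Set.Ici a) a with hc_def
  have hc : 0 < c := hq'a
  set f : ℝ → ℝ := fun τ => 1 / Real.sqrt (q τ) with hf_def
  -- continuity facts
  have hqcont : ContinuousOn q (Set.Ici a) := hq.continuousOn
  have hfcontAt : ∀ τ, a < τ → ContinuousAt f τ := by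
    intro τ hτ
    have hqat : ContinuousAt q τ :=
      hqcont.continuousAt (Filter.mem_of_superset (isOpen_Ioi.mem_nhds hτ) Set.Ioi_subset_Ici_self)
    have hne : Real.sqrt (q τ) ≠ 0 := ne_of_gt (Real.sqrt_pos.2 (hqpos τ hτ))
    exact continuousAt_const.div (Real.continuous_sqrt.continuousAt.comp hqat) hne
  have hfcont : ContinuousOn f (Set.Ioi a) := fun x hx => (hfcontAt x hx).continuousWithinAt
  have hfnonneg : ∀ τ, 0 ≤ f τ := fun τ => by positivity
  have hfpos : ∀ τ, a < τ → 0 < f τ := fun τ hτ => by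
    have := hqpos τ hτ
    simp only [hf_def]
    positivity
  -- local two-sided bound near `a`
  obtain ⟨u, hu, hbound⟩ :
      ∃ u, a < u ∧ ∀ τ ∈ Set.Ioo a u, c / 2 * (τ - a) ≤ q τ ∧ q τ ≤ 2 * c * (τ - a) := by
    have hd : HasDerivWithinAt q c (Set.Ici a) a := by
      rw [hc_def]
      exact ((hq.differentiableOn one_ne_zero) a Set.self_mem_Ici).hasDerivWithinAt
    have hslope := hasDerivWithinAt_iff_tendsto_slope.1 hd
    have hIoi : Set.Ici a \ {a} = Set.Ioi a := by
      ext x; simp [Set.mem_diff, Set.mem_Ici, Set.mem_Ioi, lt_iff_le_and_ne, eq_comm]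
    rw [hIoi] at hslope
    have hev : ∀ᶠ τ in nhdsWithin a (Set.Ioi a), slope q a τ ∈ Set.Ioo (c / 2) (2 * c) :=
      hslope (Ioo_mem_nhds (by linarith) (by linarith))
    obtain ⟨u, hu, hsub⟩ := mem_nhdsGT_iff_exists_Ioo_subset.1 hev
    refine ⟨u, hu, fun τ hτ => ?_⟩
    have hs := hsub hτ
    have hτa : 0 < τ - a := by linarith [hτ.1]
    have hslope_eq : slope q a τ = q τ / (τ - a) := by
      rw [slope_def_field, hqa]
      ring
    simp only [Set.mem_setOf_eq, hslope_eq, Set.mem_Ioo] at hs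
    obtain ⟨h1, h2⟩ := hs
    constructor
    · have := (div_lt_iff₀ hτa).1 h2
      nlinarith [(lt_div_iff₀ hτa).1 h1]
    · nlinarith [(div_lt_iff₀ hτa).1 h2]
  -- integrability
  have hInt : ∀ t, a ≤ t → IntegrableOn f (Set.Ioc a t) := by
    set m := (a + u) / 2 with hm_def
    have ham : a < m := by simp only [hm_def]; linarith
    have hmu : m < u := by simp only [hm_def]; linarith
    have hmaj : IntegrableOn (fun τ => (Real.sqrt (c / 2))⁻¹ * (τ - a) ^ (-(1/2) : ℝ)) (Set.Ioc a m) := by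
      have h1 : IntervalIntegrable (fun x : ℝ => x ^ (-(1/2) : ℝ)) volume 0 (m - a) :=
        intervalIntegral.intervalIntegrable_rpow' (by norm_num)
      have h2 := (h1.comp_sub_right a).const_mul (Real.sqrt (c / 2))⁻¹
      rw [zero_add] at h2
      have h3 : m - a + a = m := by ring
      rw [h3] at h2
      exact (intervalIntegrable_iff_integrableOn_Ioc_of_le ham.le).1 h2
    have hmeas : AEStronglyMeasurable f (volume.restrict (Set.Ioc a m)) :=
      (hfcont.mono (fun x hx => hx.1)).aestronglyMeasurable measurableSet_Ioc
    have hInt1 : IntegrableOn f (Set.Ioc a m) := by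
      refine hmaj.mono' hmeas ?_
      rw [ae_restrict_iff' measurableSet_Ioc]
      refine ae_of_all _ fun τ hτ => ?_
      have hτa : 0 < τ - a := by linarith [hτ.1]
      have hb := (hbound τ ⟨hτ.1, lt_of_le_of_lt hτ.2 hmu⟩).1
      have hq0 : 0 < q τ := hqpos τ hτ.1
      have hs1 : Real.sqrt (c / 2 * (τ - a)) ≤ Real.sqrt (q τ) := Real.sqrt_le_sqrt hb
      have hs2 : Real.sqrt (c / 2 * (τ - a)) = Real.sqrt (c / 2) * Real.sqrt (τ - a) :=
        Real.sqrt_mul (by positivity) _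
      have hs3 : (0:ℝ) < Real.sqrt (c / 2) * Real.sqrt (τ - a) := by positivity
      have hnorm : ‖f τ‖ = f τ := by
        rw [Real.norm_eq_abs, abs_of_nonneg (hfnonneg τ)]
      rw [hnorm, hf_def]
      show 1 / Real.sqrt (q τ) ≤ (Real.sqrt (c / 2))⁻¹ * (τ - a) ^ (-(1/2) : ℝ)
      have hr : (τ - a) ^ (-(1/2) : ℝ) = (Real.sqrt (τ - a))⁻¹ := by
        rw [Real.sqrt_eq_rpow, ← Real.rpow_neg hτa.le]
      rw [hr, ← mul_inv, one_div]
      exact inv_anti₀ hs3 (hs2 ▸ hs1)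
    intro t ht
    rcases le_or_gt t m with h | h
    · exact hInt1.mono_set (Set.Ioc_subset_Ioc_right h)
    · have hInt2 : IntegrableOn f (Set.Icc m t) :=
        (hfcont.mono (fun x hx => lt_of_lt_of_le ham hx.1)).integrableOn_Icc
      have hsub2 : Set.Ioc a t ⊆ Set.Ioc a m ∪ Set.Icc m t := by
        intro x hx
        rcases le_or_gt x m with h' | h'
        · exact Or.inl ⟨hx.1, h'⟩
        · exact Or.inr ⟨h'.le, hx.2⟩
      exact (hInt1.union hInt2).mono_set hsub2
  have hII : ∀ x y, a ≤ x → x ≤ y → IntervalIntegrable f volume x y := fun x y hax hxy =>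
    (intervalIntegrable_iff_integrableOn_Ioc_of_le hxy).2
      ((hInt y (hax.trans hxy)).mono_set (Set.Ioc_subset_Ioc_left hax))
  have hFadd : ∀ t₁ t₂, a ≤ t₁ → t₁ ≤ t₂ → F t₂ = F t₁ + ∫ τ in t₁..t₂, f τ := by
    intro t₁ t₂ h₁ h₂
    rw [hF, hF, intervalIntegral.integral_add_adjacent_intervals (hII a t₁ le_rfl h₁) (hII t₁ t₂ h₁ h₂)]
  have hSM : StrictMonoOn F (Set.Ici a) := by
    intro t₁ h₁ t₂ h₂ hlt
    rw [hFadd t₁ t₂ h₁ hlt.le]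
    have : 0 < ∫ τ in t₁..t₂, f τ :=
      intervalIntegral.intervalIntegral_pos_of_pos_on (hII t₁ t₂ h₁ hlt.le)
        (fun x hx => hfpos x (lt_of_le_of_lt h₁ hx.1)) hlt
    linarith
  have hTop : Tendsto F atTop atTop := by
    have hev : ∀ᶠ t in atTop, q t / t ^ 2 < 2 * ε :=
      hlim.eventually_lt_const (by linarith)
    obtain ⟨T₀, hT₀⟩ := eventually_atTop.1 hev
    set T := max T₀ (max (a + 1) 1) with hT_def
    have hTa : a < T := by
      have : a + 1 ≤ T := le_max_of_le_right (le_max_left _ _)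
      linarith
    have hT1 : (1:ℝ) ≤ T := le_max_of_le_right (le_max_right _ _)
    have hT0 : (0:ℝ) < T := by linarith
    have hqb : ∀ t, T ≤ t → q t < 2 * ε * t ^ 2 := by
      intro t ht
      have h1 := hT₀ t ((le_max_left _ _).trans ht)
      have ht0 : (0:ℝ) < t := lt_of_lt_of_le hT0 ht
      have := (div_lt_iff₀ (by positivity : (0:ℝ) < t ^ 2)).1 h1
      linarith
    set k := (Real.sqrt (2 * ε))⁻¹ with hk_def
    have hk0 : 0 < k := by rw [hk_def]; positivity
    have hlow : ∀ t, T ≤ t → F T + k * Real.log (t / T) ≤ F t := by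
      intro t ht
      have hcmp : ∫ τ in T..t, k * (1 / τ) ≤ ∫ τ in T..t, f τ := by
        apply intervalIntegral.integral_mono_on ht
        · apply ContinuousOn.intervalIntegrable
          apply ContinuousOn.mul continuousOn_const
          apply ContinuousOn.div continuousOn_const continuousOn_id
          intro x hx
          rw [Set.uIcc_of_le ht] at hx
          exact ne_of_gt (lt_of_lt_of_le hT0 hx.1)
        · exact hII T t hTa.le ht
        · intro x hx
          have hxT : T ≤ x := hx.1
          have hx0 : 0 < x := lt_of_lt_of_le hT0 hxT
          have hqx : 0 < q x := hqpos x (lt_of_lt_of_le hTa hxT)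
          have hb : q x ≤ 2 * ε * x ^ 2 := (hqb x hxT).le
          have hs : Real.sqrt (q x) ≤ Real.sqrt (2 * ε) * x := by
            have heq : Real.sqrt (2 * ε * x ^ 2) = Real.sqrt (2 * ε) * x := by
              rw [Real.sqrt_mul (by positivity), Real.sqrt_sq hx0.le]
            rw [← heq]
            exact Real.sqrt_le_sqrt hb
          have hsq : 0 < Real.sqrt (q x) := Real.sqrt_pos.2 hqx
          rw [hf_def]
          show k * (1 / x) ≤ 1 / Real.sqrt (q x)
          rw [hk_def, one_div, one_div, ← mul_inv]
          exact inv_anti₀ hsq hs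
      have hci : ∫ τ in T..t, k * (1 / τ) = k * Real.log (t / T) := by
        rw [intervalIntegral.integral_const_mul, integral_one_div]
        intro hmem
        rw [Set.uIcc_of_le ht] at hmem
        exact absurd hmem.1 (not_le.2 hT0)
      rw [hFadd T t hTa.le ht, ← hci]
      linarith
    apply tendsto_atTop_mono' _ (eventually_atTop.2 ⟨T, hlow⟩)
    have h1 : Tendsto (fun t => Real.log (t / T)) atTop atTop :=
      Real.tendsto_log_atTop.comp (tendsto_id.atTop_div_const hT0)
    exact tendsto_atTop_add_const_left _ _ (h1.const_mul_atTop hk0)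
  refine ⟨hInt, hSM, hTop, ?_⟩
  intro G hGF hFG hGmem g hg₀ hgneg
  have hFa : F a = 0 := by rw [hF]; simp
  have hFpos : ∀ t, a < t → 0 < F t := by
    intro t ht
    have := hSM (Set.self_mem_Ici) (Set.mem_Ici.2 ht.le) ht
    rwa [hFa] at this
  have hG0 : G 0 = a := by
    have := hGF a Set.self_mem_Ici
    rwa [hFa] at this
  have hGgt : ∀ s, 0 < s → a < G s := by
    intro s hs
    rcases eq_or_lt_of_le (Set.mem_Ici.1 (hGmem s hs.le)) with h | h
    · exfalso
      have := hFG s hs.le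
      rw [← h, hFa] at this
      linarith
    · exact h
  have hMono := hSM.monotoneOn
  have hGlt : ∀ s t, 0 ≤ s → a ≤ t → s < F t → G s < t := by
    intro s t hs ht h
    by_contra hcon
    push_neg at hcon
    have := hMono (Set.mem_Ici.2 ht) (hGmem s hs) hcon
    rw [hFG s hs] at this
    linarith
  have hGgt' : ∀ s t, 0 ≤ s → a ≤ t → F t < s → t < G s := by
    intro s t hs ht h
    by_contra hcon
    push_neg at hcon
    have := hMono (hGmem s hs) (Set.mem_Ici.2 ht) hcon
    rw [hFG s hs] at this
    linarith
  -- FTC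
  have hFderiv : ∀ t, a < t → HasDerivAt F (f t) t := by
    intro t ht
    have h1 : HasDerivAt (fun z => ∫ τ in a..z, f τ) (f t) t :=
      intervalIntegral.integral_hasDerivAt_right (hII a t le_rfl ht.le)
        (hfcont.stronglyMeasurableAtFilter isOpen_Ioi t ht) (hfcontAt t ht)
    have hFe : F = fun z => ∫ τ in a..z, f τ := funext hF
    rw [hFe]
    exact h1
  -- continuity of G on (0,∞)
  have hGcont : ∀ s, 0 < s → ContinuousAt G s := by
    intro s hs
    rw [Metric.continuousAt_iff]
    intro e he
    have ht : a < G s := hGgt s hs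
    set t := G s with ht_def
    set e' := min (e / 2) ((t - a) / 2) with he'_def
    have he' : 0 < e' := lt_min (by linarith) (by linarith)
    have he'e : e' < e := lt_of_le_of_lt (min_le_left _ _) (by linarith)
    have ha' : a < t - e' := by
      have : e' ≤ (t - a) / 2 := min_le_right _ _
      linarith
    have hFt : F t = s := hFG s hs.le
    have hδ1 : F (t - e') < s := by
      rw [← hFt]
      exact hSM (Set.mem_Ici.2 ha'.le) (Set.mem_Ici.2 (by linarith : a ≤ t)) (by linarith)
    have hδ2 : s < F (t + e') := by
      rw [← hFt]
      exact hSM (Set.mem_Ici.2 (by linarith : a ≤ t)) (Set.mem_Ici.2 (by linarith)) (by linarith)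
    refine ⟨min (s - F (t - e')) (F (t + e') - s), lt_min (by linarith) (by linarith), ?_⟩
    intro x hx
    rw [Real.dist_eq] at hx
    have hx1 : F (t - e') < x := by
      have h1 := abs_lt.1 hx
      have h2 : min (s - F (t - e')) (F (t + e') - s) ≤ s - F (t - e') := min_le_left _ _
      linarith [h1.1]
    have hx2 : x < F (t + e') := by
      have h1 := abs_lt.1 hx
      have h2 : min (s - F (t - e')) (F (t + e') - s) ≤ F (t + e') - s := min_le_right _ _
      linarith [h1.2]
    have hx0 : 0 ≤ x := le_of_lt (lt_of_lt_of_le (hFpos _ ha') hx1.le)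
    have hup : G x < t + e' := hGlt x (t + e') hx0 (by linarith) hx2
    have hdown : t - e' < G x := hGgt' x (t - e') hx0 ha'.le hx1
    rw [Real.dist_eq, abs_lt]
    constructor <;> [linarith; linarith]
  have hGderiv : ∀ s, 0 < s → HasDerivAt G (Real.sqrt (q (G s))) s := by
    intro s hs
    have ht := hGgt s hs
    have hne : f (G s) ≠ 0 := ne_of_gt (hfpos _ ht)
    have hev : ∀ᶠ y in nhds s, F (G y) = y := by
      filter_upwards [eventually_gt_nhds hs] with y hy using hFG y hy.le
    have h := HasDerivAt.of_local_left_inverse (hGcont s hs) (hFderiv (G s) ht) hne hev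
    simpa [hf_def, one_div] using h
  have hgpos' : ∀ t, 0 < t → HasDerivAt g (Real.sqrt (q (G t))) t := by
    intro t ht
    refine (hGderiv t ht).congr_of_eventuallyEq ?_
    filter_upwards [eventually_gt_nhds ht] with x hx using hg₀ x hx.le
  have hgneg' : ∀ t, t < 0 → HasDerivAt g (-Real.sqrt (q (G (-t)))) t := by
    intro t ht
    have h1 : HasDerivAt (fun x : ℝ => G (-x)) (Real.sqrt (q (G (-t))) * (-1)) t :=
      HasDerivAt.comp t (hGderiv (-t) (by linarith)) (hasDerivAt_neg t)
    have h2 : HasDerivAt (fun x : ℝ => G (-x)) (-Real.sqrt (q (G (-t)))) t := by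
      simpa using h1
    refine h2.congr_of_eventuallyEq ?_
    filter_upwards [eventually_lt_nhds ht] with x hx using hgneg x hx
  have hg0' : HasDerivAt g 0 0 := by
    set t₀ := (a + u) / 2 with ht₀_def
    have hat₀ : a < t₀ := by simp only [ht₀_def]; linarith
    have ht₀u : t₀ < u := by simp only [ht₀_def]; linarith
    set s₀ := F t₀ with hs₀_def
    have hs₀ : 0 < s₀ := hFpos t₀ hat₀
    have claim : ∀ s, 0 ≤ s → s < s₀ → G s - a ≤ 2 * c * s ^ 2 := by
      intro s hs hss
      have hGt₀ : G s < t₀ := hGlt s t₀ hs hat₀.le hss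
      rcases eq_or_lt_of_le (Set.mem_Ici.1 (hGmem s hs)) with h | h
      · rw [← h]
        nlinarith
      · set τ := G s with hτ_def
        have hτa : 0 < τ - a := by linarith
        set X := 2 * c * (τ - a) with hX_def
        have hX : 0 < X := by positivity
        set k := (Real.sqrt X)⁻¹ with hk_def
        have hsX : 0 < Real.sqrt X := Real.sqrt_pos.2 hX
        have hlow : (τ - a) * k ≤ s := by
          have h1 : ∫ σ in Set.Ioc a τ, k ≤ ∫ σ in Set.Ioc a τ, f σ := by
            apply setIntegral_mono_on
            · exact integrableOn_const measure_Ioc_lt_top.ne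
            · exact hInt τ (by linarith)
            · exact measurableSet_Ioc
            · intro σ hσ
              have hσa : a < σ := hσ.1
              have hσu : σ < u := by
                have := hσ.2
                linarith
              have hb := (hbound σ ⟨hσa, hσu⟩).2
              have hqσ : 0 < q σ := hqpos σ hσa
              have hs1 : Real.sqrt (q σ) ≤ Real.sqrt X := by
                apply Real.sqrt_le_sqrt
                rw [hX_def]
                have := hσ.2
                nlinarith
              rw [hf_def]
              show k ≤ 1 / Real.sqrt (q σ)
              rw [one_div, hk_def]
              exact inv_anti₀ (Real.sqrt_pos.2 hqσ) hs1
          have h2 : ∫ σ in Set.Ioc a τ, k = (τ - a) * k := by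
            rw [setIntegral_const, measureReal_def, Real.volume_Ioc, smul_eq_mul,
              ENNReal.toReal_ofReal (by linarith : (0:ℝ) ≤ τ - a)]
          have h3 : F τ = ∫ σ in Set.Ioc a τ, f σ := by
            rw [hF, intervalIntegral.integral_of_le (by linarith : a ≤ τ)]
          have h4 : F τ = s := by rw [hτ_def]; exact hFG s hs
          rw [← h2, ← h4, h3]
          exact h1
        have h5 : τ - a ≤ s * Real.sqrt X := by
          have h6 := mul_le_mul_of_nonneg_right hlow hsX.le
          rw [mul_assoc, inv_mul_cancel₀ (ne_of_gt hsX), mul_one] at h6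
          exact h6
        have h6 : (τ - a) ^ 2 ≤ s ^ 2 * X := by
          nlinarith [Real.sq_sqrt hX.le]
        rw [hX_def] at h6
        nlinarith
    have hga : g 0 = a := (hg₀ 0 le_rfl).trans hG0
    apply hasDerivAt_iff_tendsto_slope.2
    apply squeeze_zero_norm' (a := fun t' => 2 * c * |t'|)
    · have h1 : ∀ᶠ t' : ℝ in nhds (0:ℝ), |t'| < s₀ := by
        have := eventually_abs_sub_lt (0:ℝ) hs₀
        simpa using this
      filter_upwards [self_mem_nhdsWithin, eventually_nhdsWithin_of_eventually_nhds h1]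
        with t' ht' hlt
      have ht'0 : t' ≠ 0 := ht'
      have hgt' : g t' = G |t'| := by
        rcases le_or_gt 0 t' with h | h
        · rw [hg₀ t' h, abs_of_nonneg h]
        · rw [hgneg t' h, abs_of_neg h]
      have hGa : a ≤ G |t'| := hGmem |t'| (abs_nonneg t')
      have hcl := claim |t'| (abs_nonneg t') hlt
      rw [sq_abs] at hcl
      have habs : 0 < |t'| := abs_pos.2 ht'0
      rw [slope_def_field, hga, hgt', sub_zero, Real.norm_eq_abs, abs_div,
        abs_of_nonneg (by linarith : (0:ℝ) ≤ G |t'| - a)]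
      rw [div_le_iff₀ habs]
      nlinarith [sq_abs t']
    · have h2 : Tendsto (fun t' : ℝ => 2 * c * |t'|) (nhds 0) (nhds (2 * c * |(0:ℝ)|)) :=
        (continuous_const.mul continuous_abs).tendsto 0
      simp only [abs_zero, mul_zero] at h2
      exact h2.mono_left nhdsWithin_le_nhds
  constructor
  · intro t
    rcases lt_trichotomy t 0 with ht | ht | ht
    · exact (hgneg' t ht).differentiableAt
    · rw [ht]; exact hg0'.differentiableAt
    · exact (hgpos' t ht).differentiableAt
  · intro t
    rcases lt_trichotomy t 0 with ht | ht | ht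
    · rw [(hgneg' t ht).deriv, hgneg t ht]
      rw [neg_pow]
      simp [Real.sq_sqrt (hqpos _ (hGgt (-t) (by linarith))).le]
    · rw [ht, hg0'.deriv, hg₀ 0 le_rfl, hG0, hqa]
      ring
    · rw [(hgpos' t ht).deriv, hg₀ t ht.le, Real.sq_sqrt (hqpos _ (hGgt t ht)).le]
end

section
/- Let $q:[a,b]\to\mathbb{R}$ be a continuously differentiable function with $q(a)=0=q(b)$, $q'(a)>0$, $q'(b)<0$, and $q(t)>0$ for all $a<t<b$. Then $F:[a,b]\to\mathbb{R}$ defined by $F(t)=\int_a^t q(\tau)^{-1/2}\,d\tau$ is well defined, strictly increasing, and $T:=2\lim_{t\to b}F(t)$ is finite. Moreover, if $G:[0,T/2]\to[a,b]$ is the inverse of $F$, then the $T$-periodic function $g:\mathbb{R}\to[a,b]$ determined by $g(t)=G(t)$ for $0\le t\le T/2$ and $g(t)=G(-t)$ for $-T/2\le t\le 0$ is differentiable and satisfies $(g'(t))^2 = q(g(t))$ for all $t\in\mathbb{R}$. -/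
open Filter MeasureTheory

open Set

lemma aux_shift {g : ℝ → ℝ} {c d t : ℝ} (hper : Function.Periodic g c)
    (h : HasDerivAt g d t) : HasDerivAt g d (t + c) := by
  have he : (fun x => g (x - c)) = g := funext fun x => by
    have h0 := hper (x - c); rw [sub_add_cancel] at h0; exact h0.symm
  have h1 : HasDerivAt (fun x : ℝ => x - c) 1 (t + c) := (hasDerivAt_id _).sub_const c
  have h2 : HasDerivAt g d (t + c - c) := by rwa [add_sub_cancel_right]
  have h3 := h2.comp (t + c) h1
  rw [show g ∘ (fun x : ℝ => x - c) = fun x => g (x - c) from rfl, he] at h3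
  simpa using h3

lemma aux_even {g : ℝ → ℝ} {d t : ℝ} (hev : ∀ x, g (-x) = g x)
    (h : HasDerivAt g d t) : HasDerivAt g (-d) (-t) := by
  have he : (fun x => g (-x)) = g := funext hev
  have h1 : HasDerivAt (fun x : ℝ => -x) (-1) (-t) := hasDerivAt_neg _
  have h2 : HasDerivAt g d (-(-t)) := by rwa [neg_neg]
  have h3 := h2.comp (-t) h1
  rw [show g ∘ (fun x : ℝ => -x) = fun x => g (-x) from rfl, he] at h3
  simpa using h3

lemma aux_evnw {s : Set ℝ} {x : ℝ} {P : ℝ → Prop} (h : ∀ᶠ y in nhdsWithin x s, P y) :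
    ∃ δ > 0, ∀ y ∈ s, |y - x| < δ → P y := by
  rw [Filter.Eventually, Metric.mem_nhdsWithin_iff] at h
  obtain ⟨δ, hδ, hsub⟩ := h
  exact ⟨δ, hδ, fun y hy hyd => hsub ⟨by rwa [Metric.mem_ball, Real.dist_eq], hy⟩⟩

lemma aux_intlow {f : ℝ → ℝ} {x y c : ℝ} (hxy : x ≤ y) (hfi : IntegrableOn f (Set.Ioo x y))
    (hb : ∀ τ ∈ Set.Ioo x y, c ≤ f τ) : (y - x) * c ≤ ∫ τ in x..y, f τ := by
  rw [intervalIntegral.integral_of_le hxy, integral_Ioc_eq_integral_Ioo]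
  have h1 : ∫ τ in Set.Ioo x y, (fun _ => c) τ ≤ ∫ τ in Set.Ioo x y, f τ := by
    refine setIntegral_mono_on ?_ hfi measurableSet_Ioo hb
    exact integrableOn_const (by rw [Real.volume_Ioo]; exact ENNReal.ofReal_ne_top)
  rwa [setIntegral_const, measureReal_def, Real.volume_Ioo, ENNReal.toReal_ofReal (sub_nonneg.2 hxy),
    smul_eq_mul] at h1

/-- Lemma 2.3 of the paper: if `q ∈ C¹([a,b])` has simple zeros at `a` and `b`
and is positive on `(a,b)`, then `F(t) = ∫_a^t q(τ)^{-1/2} dτ` is well defined,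
strictly increasing, with finite limit `T/2 = F(b)` as `t → b⁻`; moreover the
`T`-periodic extension `g` of the inverse `G` of `F` solves `(g')² = q ∘ g`. -/
theorem stmt_2 (a b : ℝ) (hab : a < b) (q : ℝ → ℝ)
    (hq : ContDiffOn ℝ 1 q (Set.Icc a b))
    (hqa : q a = 0) (hqb : q b = 0)
    (hq'a : 0 < derivWithin q (Set.Icc a b) a)
    (hq'b : derivWithin q (Set.Icc a b) b < 0)
    (hqpos : ∀ t, a < t → t < b → 0 < q t)
    (F : ℝ → ℝ)
    (hF : ∀ t, F t = ∫ τ in a..t, 1 / Real.sqrt (q τ)) :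
    IntegrableOn (fun τ => 1 / Real.sqrt (q τ)) (Set.Ioo a b) ∧
    StrictMonoOn F (Set.Icc a b) ∧
    Tendsto F (nhdsWithin b (Set.Iio b)) (nhds (F b)) ∧
    ∀ G : ℝ → ℝ,
      (∀ t ∈ Set.Icc a b, G (F t) = t) →
      (∀ s ∈ Set.Icc (0 : ℝ) (F b), G s ∈ Set.Icc a b) →
      ∀ g : ℝ → ℝ,
        Function.Periodic g (2 * F b) →
        (∀ t ∈ Set.Icc (0 : ℝ) (F b), g t = G t) →
        (∀ t ∈ Set.Icc (-(F b)) (0 : ℝ), g t = G (-t)) →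
        Differentiable ℝ g ∧ ∀ t, deriv g t ^ 2 = q (g t) := by
  set f : ℝ → ℝ := fun τ => 1 / Real.sqrt (q τ) with hfdef
  have hqc : ContinuousOn q (Set.Icc a b) := hq.continuousOn
  have hfval : ∀ τ, f τ = 1 / Real.sqrt (q τ) := fun τ => rfl
  have hfnonneg : ∀ τ, 0 ≤ f τ := fun τ => by
    rw [hfval]; positivity
  have hfpos : ∀ τ, a < τ → τ < b → 0 < f τ := fun τ h1 h2 => by
    rw [hfval]; exact one_div_pos.mpr (Real.sqrt_pos.2 (hqpos τ h1 h2))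
  have hfca : ∀ x ∈ Set.Ioo a b, ContinuousAt f x := by
    intro x hx
    have hqx : ContinuousAt q x := hqc.continuousAt (Icc_mem_nhds hx.1 hx.2)
    have hne : Real.sqrt (q x) ≠ 0 := ne_of_gt (Real.sqrt_pos.2 (hqpos x hx.1 hx.2))
    exact continuousAt_const.div (Real.continuous_sqrt.continuousAt.comp hqx) hne
  -- lower bounds for q near the endpoints
  have hslope_a : Tendsto (slope q a) (nhdsWithin a (Set.Icc a b \ {a}))
      (nhds (derivWithin q (Set.Icc a b) a)) := by
    have h1 : DifferentiableWithinAt ℝ q (Set.Icc a b) a :=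
      (hq.differentiableOn one_ne_zero) a ⟨le_rfl, hab.le⟩
    have := h1.hasDerivWithinAt
    rwa [hasDerivWithinAt_iff_tendsto_slope] at this
  have hslope_b : Tendsto (slope q b) (nhdsWithin b (Set.Icc a b \ {b}))
      (nhds (derivWithin q (Set.Icc a b) b)) := by
    have h1 : DifferentiableWithinAt ℝ q (Set.Icc a b) b :=
      (hq.differentiableOn one_ne_zero) b ⟨hab.le, le_rfl⟩
    have := h1.hasDerivWithinAt
    rwa [hasDerivWithinAt_iff_tendsto_slope] at this
  set c₁ : ℝ := derivWithin q (Set.Icc a b) a / 2 with hc₁def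
  set c₂ : ℝ := -(derivWithin q (Set.Icc a b) b) / 2 with hc₂def
  have hc₁ : 0 < c₁ := by rw [hc₁def]; linarith
  have hc₂ : 0 < c₂ := by rw [hc₂def]; linarith
  have hev1 : ∀ᶠ τ in nhdsWithin a (Set.Icc a b \ {a}), c₁ < slope q a τ := by
    apply hslope_a.eventually (eventually_gt_nhds ?_)
    rw [hc₁def]; linarith
  have hev2 : ∀ᶠ τ in nhdsWithin b (Set.Icc a b \ {b}), slope q b τ < -c₂ := by
    apply hslope_b.eventually (eventually_lt_nhds ?_)
    rw [hc₂def]; linarith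
  obtain ⟨δ₁, hδ₁, hq1⟩ := aux_evnw hev1
  obtain ⟨δ₂, hδ₂, hq2⟩ := aux_evnw hev2
  have hna : ∀ τ, a < τ → τ ≤ b → τ - a < δ₁ → c₁ * (τ - a) ≤ q τ := by
    intro τ h1 h2 h3
    have h4 : 0 < τ - a := by linarith
    have h5 := hq1 τ ⟨⟨h1.le, h2⟩, by simp [ne_of_gt h1]⟩ (by rwa [abs_of_pos h4])
    rw [slope_def_field, hqa, sub_zero] at h5
    calc c₁ * (τ - a) ≤ q τ / (τ - a) * (τ - a) :=
          mul_le_mul_of_nonneg_right h5.le h4.le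
      _ = q τ := div_mul_cancel₀ _ (ne_of_gt h4)
  have hnb : ∀ τ, a ≤ τ → τ < b → b - τ < δ₂ → c₂ * (b - τ) ≤ q τ := by
    intro τ h1 h2 h3
    have h4 : τ - b < 0 := by linarith
    have h5 := hq2 τ ⟨⟨h1, h2.le⟩, by simp [ne_of_lt h2]⟩ (by rw [abs_of_neg h4]; linarith)
    rw [slope_def_field, hqb, sub_zero] at h5
    have h6 := mul_lt_mul_of_neg_right h5 h4
    rw [div_mul_cancel₀ _ (ne_of_lt h4)] at h6
    have h7 : -c₂ * (τ - b) = c₂ * (b - τ) := by ring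
    linarith
  -- split points
  set u : ℝ := a + min δ₁ (b - a) / 2 with hudef
  set v : ℝ := b - min δ₂ (b - a) / 2 with hvdef
  have hmin1 : 0 < min δ₁ (b - a) := lt_min hδ₁ (by linarith)
  have hmin2 : 0 < min δ₂ (b - a) := lt_min hδ₂ (by linarith)
  have hmin1' : min δ₁ (b - a) ≤ b - a := min_le_right _ _
  have hmin2' : min δ₂ (b - a) ≤ b - a := min_le_right _ _
  have hmin1'' : min δ₁ (b - a) ≤ δ₁ := min_le_left _ _
  have hmin2'' : min δ₂ (b - a) ≤ δ₂ := min_le_left _ _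
  have hau : a < u := by rw [hudef]; linarith
  have hub : u < b := by rw [hudef]; linarith
  have hav : a < v := by rw [hvdef]; linarith
  have hvb : v < b := by rw [hvdef]; linarith
  have huv : u ≤ v := by rw [hudef, hvdef]; linarith
  have huδ : u - a < δ₁ := by rw [hudef]; linarith
  have hvδ : b - v < δ₂ := by rw [hvdef]; linarith
  -- integrability near a
  have hP1 : IntegrableOn f (Set.Ioc a u) := by
    have h1 : IntervalIntegrable (fun x : ℝ => x ^ (-(1/2) : ℝ)) volume 0 (u - a) :=
      intervalIntegral.intervalIntegrable_rpow' (by norm_num)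
    have h2 := h1.comp_sub_right a
    simp only [zero_add, sub_add_cancel] at h2
    have hmajI : IntegrableOn (fun x : ℝ => (Real.sqrt c₁)⁻¹ * (x - a) ^ (-(1/2) : ℝ))
        (Set.Ioc a u) :=
      (((intervalIntegrable_iff_integrableOn_Ioc_of_le hau.le).1 h2)).const_mul _
    refine Integrable.mono' hmajI ?_ ?_
    · exact ContinuousOn.aestronglyMeasurable
        (fun x hx => (hfca x ⟨hx.1, lt_of_le_of_lt hx.2 hub⟩).continuousWithinAt)
        measurableSet_Ioc
    · rw [ae_restrict_iff' measurableSet_Ioc]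
      refine ae_of_all _ ?_
      intro τ hτ
      have hτa : a < τ := hτ.1
      have hτb : τ < b := lt_of_le_of_lt hτ.2 hub
      have hqτ : c₁ * (τ - a) ≤ q τ := hna τ hτa hτb.le (by linarith [hτ.2])
      have hqτ0 : 0 < q τ := hqpos τ hτa hτb
      have hs1 : Real.sqrt c₁ * Real.sqrt (τ - a) ≤ Real.sqrt (q τ) := by
        rw [← Real.sqrt_mul hc₁.le]; exact Real.sqrt_le_sqrt hqτ
      have hs0 : 0 < Real.sqrt c₁ * Real.sqrt (τ - a) :=
        mul_pos (Real.sqrt_pos.2 hc₁) (Real.sqrt_pos.2 (by linarith))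
      have hnorm : ‖f τ‖ = (Real.sqrt (q τ))⁻¹ := by
        rw [Real.norm_eq_abs, abs_of_nonneg (hfnonneg τ), hfval, one_div]
      rw [hnorm]
      refine (inv_anti₀ hs0 hs1).trans (le_of_eq ?_)
      rw [mul_inv, Real.rpow_neg (by linarith : (0:ℝ) ≤ τ - a), ← Real.sqrt_eq_rpow]
  -- integrability near b
  have hP3 : IntegrableOn f (Set.Ico v b) := by
    have h1 : IntervalIntegrable (fun x : ℝ => x ^ (-(1/2) : ℝ)) volume 0 (b - v) :=
      intervalIntegral.intervalIntegrable_rpow' (by norm_num)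
    have h2 := h1.comp_sub_left b
    simp only [sub_zero, sub_sub_cancel] at h2
    have hmajI : IntegrableOn (fun x : ℝ => (Real.sqrt c₂)⁻¹ * (b - x) ^ (-(1/2) : ℝ))
        (Set.Ico v b) := by
      have h3 : IntegrableOn (fun x : ℝ => (Real.sqrt c₂)⁻¹ * (b - x) ^ (-(1/2) : ℝ))
          (Set.Ioc v b) :=
        ((intervalIntegrable_iff_integrableOn_Ioc_of_le hvb.le).1 h2.symm).const_mul _
      exact (integrableOn_Ico_iff_integrableOn_Ioo).2 (h3.mono_set Set.Ioo_subset_Ioc_self)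
    refine Integrable.mono' hmajI ?_ ?_
    · exact ContinuousOn.aestronglyMeasurable
        (fun x hx => (hfca x ⟨lt_of_lt_of_le hav hx.1, hx.2⟩).continuousWithinAt)
        measurableSet_Ico
    · rw [ae_restrict_iff' measurableSet_Ico]
      refine ae_of_all _ ?_
      intro τ hτ
      have hτb : τ < b := hτ.2
      have hτa : a < τ := lt_of_lt_of_le hav hτ.1
      have hqτ : c₂ * (b - τ) ≤ q τ := hnb τ hτa.le hτb (by linarith [hτ.1])
      have hqτ0 : 0 < q τ := hqpos τ hτa hτb
      have hs1 : Real.sqrt c₂ * Real.sqrt (b - τ) ≤ Real.sqrt (q τ) := by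
        rw [← Real.sqrt_mul hc₂.le]; exact Real.sqrt_le_sqrt hqτ
      have hs0 : 0 < Real.sqrt c₂ * Real.sqrt (b - τ) :=
        mul_pos (Real.sqrt_pos.2 hc₂) (Real.sqrt_pos.2 (by linarith))
      have hnorm : ‖f τ‖ = (Real.sqrt (q τ))⁻¹ := by
        rw [Real.norm_eq_abs, abs_of_nonneg (hfnonneg τ), hfval, one_div]
      rw [hnorm]
      refine (inv_anti₀ hs0 hs1).trans (le_of_eq ?_)
      rw [mul_inv, Real.rpow_neg (by linarith : (0:ℝ) ≤ b - τ), ← Real.sqrt_eq_rpow]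
  have hP2 : IntegrableOn f (Set.Icc u v) :=
    ContinuousOn.integrableOn_Icc
      (fun x hx => (hfca x ⟨lt_of_lt_of_le hau hx.1, lt_of_le_of_lt hx.2 hvb⟩).continuousWithinAt)
  have hInt : IntegrableOn f (Set.Ioo a b) := by
    apply IntegrableOn.mono_set ((hP1.union hP2).union hP3)
    intro τ hτ
    rcases le_or_gt τ u with h | h
    · exact Or.inl (Or.inl ⟨hτ.1, h⟩)
    rcases le_or_gt τ v with h' | h'
    · exact Or.inl (Or.inr ⟨h.le, h'⟩)
    · exact Or.inr ⟨h'.le, hτ.2⟩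
  have hIntIcc : IntegrableOn f (Set.Icc a b) := (integrableOn_Icc_iff_integrableOn_Ioo).2 hInt
  have huIcc : ∀ s t, s ∈ Set.Icc a b → t ∈ Set.Icc a b → IntervalIntegrable f volume s t := by
    intro s t hs ht
    refine (hIntIcc.mono_set ?_).intervalIntegrable
    rw [Set.uIcc]
    exact Set.Icc_subset_Icc (le_inf hs.1 ht.1) (sup_le hs.2 ht.2)
  have hFeq : F = fun t => ∫ τ in a..t, f τ := funext hF
  have hFa : F a = 0 := by rw [hF]; simp
  have hFdiff : ∀ s t, s ∈ Set.Icc a b → t ∈ Set.Icc a b →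
      F t - F s = ∫ τ in s..t, f τ := by
    intro s t hs ht
    have h1 := intervalIntegral.integral_add_adjacent_intervals
      (huIcc a s ⟨le_rfl, hab.le⟩ hs) (huIcc s t hs ht)
    rw [hF, hF]
    have : (∫ τ in a..s, f τ) + (∫ τ in s..t, f τ) = ∫ τ in a..t, f τ := h1
    linarith
  have hFmono : StrictMonoOn F (Set.Icc a b) := by
    intro s hs t ht hst
    have hpos : 0 < ∫ τ in s..t, f τ :=
      intervalIntegral.intervalIntegral_pos_of_pos_on (huIcc s t hs ht)
        (fun x hx => hfpos x (lt_of_le_of_lt hs.1 hx.1) (lt_of_lt_of_le hx.2 ht.2)) hst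
    have := hFdiff s t hs ht
    linarith
  have hFcont : ContinuousOn F (Set.Icc a b) := by
    rw [hFeq]
    have h1 : IntegrableOn f (Set.uIcc a b) := by rwa [Set.uIcc_of_le hab.le]
    have h2 := intervalIntegral.continuousOn_primitive_interval h1
    rwa [Set.uIcc_of_le hab.le] at h2
  have hTend : Tendsto F (nhdsWithin b (Set.Iio b)) (nhds (F b)) := by
    have h1 : ContinuousWithinAt F (Set.Ioo a b) b :=
      (hFcont b ⟨hab.le, le_rfl⟩).mono Set.Ioo_subset_Icc_self
    have h2 : Tendsto F (nhdsWithin b (Set.Ioo a b)) (nhds (F b)) := h1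
    rwa [nhdsWithin_Ioo_eq_nhdsLT hab] at h2
  refine ⟨hInt, hFmono, hTend, ?_⟩
  intro G hG hG' g hper hg₁ hg₂
  set T2 : ℝ := F b with hT2def
  have hT2pos : 0 < T2 := by
    have := hFmono ⟨le_rfl, hab.le⟩ ⟨hab.le, le_rfl⟩ hab
    rw [hFa] at this; exact this
  have hFmem : ∀ t ∈ Set.Icc a b, F t ∈ Set.Icc 0 T2 := by
    intro t ht
    constructor
    · rw [← hFa]; exact hFmono.monotoneOn ⟨le_rfl, hab.le⟩ ht ht.1
    · exact hFmono.monotoneOn ht ⟨hab.le, le_rfl⟩ ht.2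
  have hFG : ∀ s ∈ Set.Icc 0 T2, F (G s) = s := by
    intro s hs
    have h1 : s ∈ F '' Set.Icc a b := by
      apply intermediate_value_Icc hab.le hFcont
      rwa [hFa]
    obtain ⟨t, ht, hts⟩ := h1
    rw [← hts, hG t ht]
  have hGmono : MonotoneOn G (Set.Icc 0 T2) := by
    intro s hs t ht hst
    by_contra hc
    push_neg at hc
    have h1 : F (G t) < F (G s) := hFmono (hG' t ht) (hG' s hs) hc
    rw [hFG s hs, hFG t ht] at h1
    linarith
  have hGim : G '' Set.Icc 0 T2 = Set.Icc a b := by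
    apply Set.Subset.antisymm
    · rintro x ⟨s, hs, rfl⟩; exact hG' s hs
    · intro t ht; exact ⟨F t, hFmem t ht, hG t ht⟩
  have hGa : G 0 = a := by have := hG a ⟨le_rfl, hab.le⟩; rwa [hFa] at this
  have hGb : G T2 = b := hG b ⟨hab.le, le_rfl⟩
  have hg0 : g 0 = a := by rw [hg₁ 0 ⟨le_rfl, hT2pos.le⟩, hGa]
  have hgT2 : g T2 = b := by rw [hg₁ T2 ⟨hT2pos.le, le_rfl⟩, hGb]
  -- interior differentiability
  have hDioo : ∀ s ∈ Set.Ioo 0 T2, ∃ d, HasDerivAt g d s ∧ d ^ 2 = q (g s) := by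
    intro s hs
    have hsIcc : s ∈ Set.Icc 0 T2 := Set.Ioo_subset_Icc_self hs
    have hxIcc : G s ∈ Set.Icc a b := hG' s hsIcc
    have hFGs : F (G s) = s := hFG s hsIcc
    have hxa : a < G s := by
      rcases eq_or_lt_of_le hxIcc.1 with h | h
      · exfalso; rw [← h, hFa] at hFGs; linarith [hs.1]
      · exact h
    have hxb : G s < b := by
      rcases eq_or_lt_of_le hxIcc.2 with h | h
      · exfalso; rw [h] at hFGs; rw [← hT2def] at hFGs; linarith [hs.2]
      · exact h
    have hq0 : 0 < q (G s) := hqpos _ hxa hxb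
    have hfx : 0 < f (G s) := hfpos _ hxa hxb
    have hFd : HasDerivAt F (f (G s)) (G s) := by
      have h1 : IntervalIntegrable f volume a (G s) := huIcc a (G s) ⟨le_rfl, hab.le⟩ hxIcc
      have hmeas : StronglyMeasurableAtFilter f (nhds (G s)) volume :=
        ContinuousOn.stronglyMeasurableAtFilter isOpen_Ioo
          (fun x hx => (hfca x hx).continuousWithinAt) (G s) ⟨hxa, hxb⟩
      have h2 := intervalIntegral.integral_hasDerivAt_right h1 hmeas (hfca _ ⟨hxa, hxb⟩)
      rw [hFeq]
      exact h2
    have hGc : ContinuousAt G s :=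
      continuousAt_of_monotoneOn_of_image_mem_nhds hGmono (Icc_mem_nhds hs.1 hs.2)
        (by rw [hGim]; exact Icc_mem_nhds hxa hxb)
    have hfg : ∀ᶠ y in nhds s, F (G y) = y := by
      filter_upwards [Ioo_mem_nhds hs.1 hs.2] with y hy
      exact hFG y (Set.Ioo_subset_Icc_self hy)
    have hGd : HasDerivAt G (f (G s))⁻¹ s :=
      HasDerivAt.of_local_left_inverse hGc hFd (ne_of_gt hfx) hfg
    have hgG : g =ᶠ[nhds s] G := by
      filter_upwards [Ioo_mem_nhds hs.1 hs.2] with y hy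
      exact hg₁ y (Set.Ioo_subset_Icc_self hy)
    have hgd : HasDerivAt g (f (G s))⁻¹ s := hGd.congr_of_eventuallyEq hgG
    refine ⟨(f (G s))⁻¹, hgd, ?_⟩
    have hinv : (f (G s))⁻¹ = Real.sqrt (q (G s)) := by
      rw [hfval, one_div, inv_inv]
    rw [hinv, Real.sq_sqrt hq0.le, hg₁ s hsIcc]
  -- derivative at 0
  have hD0 : HasDerivAt g 0 0 := by
    rw [hasDerivAt_iff_isLittleO, Asymptotics.isLittleO_iff]
    intro ε hε
    obtain ⟨ρ, hρ, hρq⟩ : ∃ ρ > 0, ∀ y ∈ Set.Icc a b, |y - a| < ρ → q y < ε ^ 2 := by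
      have h1 : Tendsto q (nhdsWithin a (Set.Icc a b)) (nhds 0) := by
        have := hqc a ⟨le_rfl, hab.le⟩
        rwa [ContinuousWithinAt, hqa] at this
      exact aux_evnw (h1.eventually (eventually_lt_nhds (by positivity)))
    set w : ℝ := min (a + ρ / 2) b with hwdef
    have hw1 : a < w := lt_min (by linarith) hab
    have hw2 : w ≤ b := min_le_right _ _
    have hw3 : w ≤ a + ρ / 2 := min_le_left _ _
    have hwIcc : w ∈ Set.Icc a b := ⟨hw1.le, hw2⟩
    have hδpos : 0 < F w := by
      have := hFmono ⟨le_rfl, hab.le⟩ hwIcc hw1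
      rwa [hFa] at this
    have hδT2 : F w ≤ T2 := hFmono.monotoneOn hwIcc ⟨hab.le, le_rfl⟩ hw2
    have claim : ∀ t : ℝ, |t| < F w → |g t - a| ≤ ε * |t| := by
      intro t ht
      rcases eq_or_ne t 0 with rfl | htne
      · simp [hg0]
      have hs0 : 0 < |t| := abs_pos.2 htne
      have hsT2 : |t| ≤ T2 := le_trans ht.le hδT2
      have hsIcc : |t| ∈ Set.Icc 0 T2 := ⟨hs0.le, hsT2⟩
      have hgt : g t = G |t| := by
        rcases le_or_gt 0 t with h' | h'
        · rw [abs_of_nonneg h']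
          rw [abs_of_nonneg h'] at hsT2
          exact hg₁ t ⟨h', hsT2⟩
        · rw [abs_of_neg h']
          rw [abs_of_neg h'] at hsT2
          exact hg₂ t ⟨by linarith, h'.le⟩
      have hxIcc : G |t| ∈ Set.Icc a b := hG' _ hsIcc
      have hFx : F (G |t|) = |t| := hFG _ hsIcc
      have hxw : G |t| ≤ w := by
        by_contra hc
        push_neg at hc
        have := hFmono hwIcc hxIcc hc
        rw [hFx] at this
        linarith
      have hfb : ∀ τ ∈ Set.Ioo a (G |t|), ε⁻¹ ≤ f τ := by
        intro τ hτ
        have hτb : τ < b := lt_of_lt_of_le (lt_of_lt_of_le hτ.2 hxw) hw2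
        have hq1 : q τ < ε ^ 2 := by
          apply hρq τ ⟨hτ.1.le, hτb.le⟩
          rw [abs_of_nonneg (by linarith [hτ.1] : (0:ℝ) ≤ τ - a)]
          have : τ < w := lt_of_lt_of_le hτ.2 hxw
          linarith
        have hq2 : 0 < q τ := hqpos τ hτ.1 hτb
        have hsq : Real.sqrt (q τ) < ε := (Real.sqrt_lt' hε).2 hq1
        rw [hfval, one_div]
        exact inv_anti₀ (Real.sqrt_pos.2 hq2) hsq.le
      have hfi : IntegrableOn f (Set.Ioo a (G |t|)) :=
        hInt.mono_set (Set.Ioo_subset_Ioo le_rfl hxIcc.2)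
      have hlow := aux_intlow hxIcc.1 hfi hfb
      have hFxval : (∫ τ in a..(G |t|), f τ) = |t| := by
        have := hFdiff a (G |t|) ⟨le_rfl, hab.le⟩ hxIcc
        rw [hFx, hFa] at this
        linarith
      rw [hFxval] at hlow
      rw [← div_eq_mul_inv, div_le_iff₀ hε] at hlow
      rw [hgt, abs_of_nonneg (sub_nonneg.2 hxIcc.1)]
      linarith
    filter_upwards [Metric.ball_mem_nhds (0:ℝ) hδpos] with t ht
    have ht' : |t| < F w := by rwa [Metric.mem_ball, Real.dist_eq, sub_zero] at ht
    have := claim t ht'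
    simpa [hg0, Real.norm_eq_abs] using this
  -- derivative at T2
  have hDT2 : HasDerivAt g 0 T2 := by
    rw [hasDerivAt_iff_isLittleO, Asymptotics.isLittleO_iff]
    intro ε hε
    obtain ⟨ρ, hρ, hρq⟩ : ∃ ρ > 0, ∀ y ∈ Set.Icc a b, |y - b| < ρ → q y < ε ^ 2 := by
      have h1 : Tendsto q (nhdsWithin b (Set.Icc a b)) (nhds 0) := by
        have := hqc b ⟨hab.le, le_rfl⟩
        rwa [ContinuousWithinAt, hqb] at this
      exact aux_evnw (h1.eventually (eventually_lt_nhds (by positivity)))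
    set w : ℝ := max (b - ρ / 2) a with hwdef
    have hw1 : w < b := max_lt (by linarith) hab
    have hw2 : a ≤ w := le_max_right _ _
    have hw3 : b - ρ / 2 ≤ w := le_max_left _ _
    have hwIcc : w ∈ Set.Icc a b := ⟨hw2, hw1.le⟩
    have hFwT2 : F w < T2 := hFmono hwIcc ⟨hab.le, le_rfl⟩ hw1
    have hFw0 : 0 ≤ F w := (hFmem w hwIcc).1
    have hδpos : 0 < T2 - F w := by linarith
    have claim : ∀ t : ℝ, |t - T2| < T2 - F w → |g t - b| ≤ ε * |t - T2| := by
      intro t ht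
      rcases eq_or_ne t T2 with rfl | htne
      · simp [hgT2]
      have hu0 : 0 < |t - T2| := abs_pos.2 (sub_ne_zero.2 htne)
      have huT2 : |t - T2| ≤ T2 := by linarith
      have hs1 : F w < T2 - |t - T2| := by linarith
      have hs2 : T2 - |t - T2| < T2 := by linarith
      have hsIcc : T2 - |t - T2| ∈ Set.Icc 0 T2 := ⟨by linarith, by linarith⟩
      have hgt : g t = G (T2 - |t - T2|) := by
        rcases lt_or_gt_of_ne htne with h' | h'
        · have habs : |t - T2| = T2 - t := by rw [abs_of_neg (by linarith)]; ring
          rw [habs, show T2 - (T2 - t) = t by ring]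
          exact hg₁ t ⟨by linarith [habs ▸ huT2], h'.le⟩
        · have habs : |t - T2| = t - T2 := abs_of_pos (by linarith)
          have h1 : g t = g (t - 2 * T2) := by
            have h2 := hper (t - 2 * T2)
            rw [show t - 2 * T2 + 2 * T2 = t by ring] at h2
            exact h2
          have h3 : g (t - 2 * T2) = G (-(t - 2 * T2)) := by
            apply hg₂
            constructor
            · linarith
            · rw [habs] at ht; linarith
          rw [h1, h3, habs, show T2 - (t - T2) = -(t - 2 * T2) by ring]
      have hxIcc : G (T2 - |t - T2|) ∈ Set.Icc a b := hG' _ hsIcc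
      have hFx : F (G (T2 - |t - T2|)) = T2 - |t - T2| := hFG _ hsIcc
      have hxw : w ≤ G (T2 - |t - T2|) := by
        by_contra hc
        push_neg at hc
        have := hFmono hxIcc hwIcc hc
        rw [hFx] at this
        linarith
      have hfb : ∀ τ ∈ Set.Ioo (G (T2 - |t - T2|)) b, ε⁻¹ ≤ f τ := by
        intro τ hτ
        have hτa : a < τ := lt_of_le_of_lt (hw2.trans hxw) hτ.1
        have hq1 : q τ < ε ^ 2 := by
          apply hρq τ ⟨hτa.le, hτ.2.le⟩
          rw [abs_of_nonpos (by linarith [hτ.2] : τ - b ≤ 0)]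
          have : w < τ := lt_of_le_of_lt hxw hτ.1
          linarith
        have hq2 : 0 < q τ := hqpos τ hτa hτ.2
        have hsq : Real.sqrt (q τ) < ε := (Real.sqrt_lt' hε).2 hq1
        rw [hfval, one_div]
        exact inv_anti₀ (Real.sqrt_pos.2 hq2) hsq.le
      have hfi : IntegrableOn f (Set.Ioo (G (T2 - |t - T2|)) b) :=
        hInt.mono_set (Set.Ioo_subset_Ioo hxIcc.1 le_rfl)
      have hlow := aux_intlow hxIcc.2 hfi hfb
      have hFxval : (∫ τ in (G (T2 - |t - T2|))..b, f τ) = |t - T2| := by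
        have h1 := hFdiff (G (T2 - |t - T2|)) b hxIcc ⟨hab.le, le_rfl⟩
        rw [hFx, ← hT2def] at h1
        linarith
      rw [hFxval] at hlow
      rw [← div_eq_mul_inv, div_le_iff₀ hε] at hlow
      rw [hgt, abs_of_nonpos (sub_nonpos.2 hxIcc.2)]
      linarith
    filter_upwards [Metric.ball_mem_nhds T2 hδpos] with t ht
    have ht' : |t - T2| < T2 - F w := by rwa [Metric.mem_ball, Real.dist_eq] at ht
    have := claim t ht'
    simpa [hgT2, Real.norm_eq_abs] using this
  -- evenness of g
  have hp2 : (0:ℝ) < 2 * T2 := by linarith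
  have hbase : ∀ x ∈ Set.Icc (-T2) T2, g (-x) = g x := by
    intro x hx
    rcases le_or_gt 0 x with h | h
    · rw [hg₂ (-x) ⟨neg_le_neg hx.2, neg_nonpos.2 h⟩, neg_neg, hg₁ x ⟨h, hx.2⟩]
    · rw [hg₁ (-x) ⟨by linarith, by linarith [hx.1]⟩, hg₂ x ⟨hx.1, h.le⟩]
  have heven : ∀ x, g (-x) = g x := by
    intro x
    have hmem := toIcoMod_mem_Ico hp2 (-T2) x
    have heq : toIcoMod hp2 (-T2) x + toIcoDiv hp2 (-T2) x • (2 * T2) = x :=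
      toIcoMod_add_toIcoDiv_zsmul hp2 (-T2) x
    set s := toIcoMod hp2 (-T2) x with hsdef
    set k := toIcoDiv hp2 (-T2) x with hkdef
    have heq' : s + (k : ℝ) * (2 * T2) = x := by
      rw [← heq]; simp [zsmul_eq_mul]
    have h1 : g x = g s := by
      have h2 := (hper.int_mul k) s
      rw [heq'] at h2
      exact h2
    have h2 : g (-x) = g (-s) := by
      have h3 := (hper.int_mul (-k)) (-s)
      have h4 : -s + ((-k : ℤ) : ℝ) * (2 * T2) = -x := by
        push_cast
        have h5 : -(k : ℝ) * (2 * T2) = -((k : ℝ) * (2 * T2)) := by ring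
        rw [h5]
        linarith [heq']
      rw [h4] at h3
      exact h3
    rw [h1, h2]
    exact hbase s ⟨hmem.1, by linarith [hmem.2]⟩
  -- derivative statement on [0, T2]
  have hIccD : ∀ s ∈ Set.Icc 0 T2, ∃ d, HasDerivAt g d s ∧ d ^ 2 = q (g s) := by
    intro s hs
    rcases eq_or_lt_of_le hs.1 with h0 | h0
    · refine ⟨0, ?_, ?_⟩
      · rw [← h0]; exact hD0
      · rw [← h0, hg0, hqa]; norm_num
    rcases eq_or_lt_of_le hs.2 with hT | hT
    · refine ⟨0, ?_, ?_⟩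
      · rw [hT]; exact hDT2
      · rw [hT, hgT2, hqb]; norm_num
    · exact hDioo s ⟨h0, hT⟩
  have hIccD2 : ∀ s ∈ Set.Icc (-T2) T2, ∃ d, HasDerivAt g d s ∧ d ^ 2 = q (g s) := by
    intro s hs
    rcases le_or_gt 0 s with h | h
    · exact hIccD s ⟨h, hs.2⟩
    · obtain ⟨d, hd, hd2⟩ := hIccD (-s) ⟨by linarith, by linarith [hs.1]⟩
      refine ⟨-d, ?_, ?_⟩
      · have := aux_even heven hd
        rwa [neg_neg] at this
      · rw [neg_sq, hd2, heven s]
  have hAll : ∀ t, ∃ d, HasDerivAt g d t ∧ d ^ 2 = q (g t) := by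
    intro t
    have hmem := toIcoMod_mem_Ico hp2 (-T2) t
    have heq : toIcoMod hp2 (-T2) t + toIcoDiv hp2 (-T2) t • (2 * T2) = t :=
      toIcoMod_add_toIcoDiv_zsmul hp2 (-T2) t
    set s := toIcoMod hp2 (-T2) t with hsdef
    set k := toIcoDiv hp2 (-T2) t with hkdef
    have heq' : s + (k : ℝ) * (2 * T2) = t := by
      rw [← heq]; simp [zsmul_eq_mul]
    obtain ⟨d, hd, hd2⟩ := hIccD2 s ⟨hmem.1, by linarith [hmem.2]⟩
    have hper' : Function.Periodic g ((k : ℝ) * (2 * T2)) := hper.int_mul k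
    have hshift : HasDerivAt g d (s + (k : ℝ) * (2 * T2)) := aux_shift hper' hd
    rw [heq'] at hshift
    refine ⟨d, hshift, ?_⟩
    rw [hd2]
    have hgs : g t = g s := by
      have h2 := hper' s
      rw [heq'] at h2
      exact h2
    rw [hgs]
  constructor
  · intro t
    obtain ⟨d, hd, _⟩ := hAll t
    exact hd.differentiableAt
  · intro t
    obtain ⟨d, hd, h2⟩ := hAll t
    rw [hd.deriv]
    exact h2
end

section
/- Let $n\ge 2$ and $1\le k\le n$ be integers, $h\in\mathbb{R}$, $c<0$, and let $g:(a_1,a_2)\to\mathbb{R}$ be positive, differentiable with $g'(t)\ne 0$ and $(g'(t))^2 = c - g(t)^2 + g(t)^2\,(h+g(t)^{-n})^2$ for all $t$. Set $\lambda = h+g^{-n}$, $r = g/\sqrt{-c}$, fix $t_0\in(a_1,a_2)$ and let $\theta(t)=\int_{t_0}^t \frac{r(\tau)\lambda(\tau)}{r(\tau)^2+1}\,d\tau$. Let $B_2(s)\in\mathbb{R}^{n+2}$ have $\cos s$ in coordinate $n+1$, $\sin s$ in coordinate $n+2$ and $0$ elsewhere, and $B_3(s)$ have $-\sin s$ in coordinate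 $n+1$, $\cos s$ in coordinate $n+2$ and $0$ elsewhere. Then $(r')^2 - r^2\lambda^2 = -1 - r^2$ on $(a_1,a_2)$, and for every $y\in\mathbb{R}^{n+2}$ with $y_{n+1}=y_{n+2}=0$ and $\langle y,y\rangle = -1$, the curves $\phi(u) = r(u)\,y + \sqrt{r(u)^2+1}\,B_2(\theta(u))$ and $\nu(u) = -r(u)\lambda(u)\,y - \frac{r(u)^2\lambda(u)}{\sqrt{r(u)^2+1}}\,B_2(\theta(u)) - \frac{r'(u)}{\sqrt{r(u)^2+1}}\,B_3(\theta(u))$ satisfy: $\langle\phi,\phi\rangle\equiv 1$, $\langle\phi',\phi'\rangle\equiv 1$, $\langle\nu,\nu\rangle\equiv -1$, $\langle\nu,\phi'\rangle\equiv 0$, $\langle\nu(u),v\rangle = 0$ for every $v\in\mathbb{R}^{n+2}$ with $v_{n+1}=v_{n+2}=0$ and $\langle v,y\rangle = 0$, and $\nu'(u) = -(nh-(n-1)\lambda(u))\,\phi'(u)$ for all $u$. -/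
noncomputable def semiForm (k : ℕ) {m : ℕ} (v w : Fin m → ℝ) : ℝ :=
  ∑ i : Fin m, (if (i : ℕ) < k then (-1 : ℝ) else 1) * v i * w i

noncomputable def e2v (n : ℕ) (s : ℝ) : Fin (n+2) → ℝ :=
  fun i => if (i : ℕ) = n then Real.cos s else if (i : ℕ) = n + 1 then Real.sin s else 0

noncomputable def e3v (n : ℕ) (s : ℝ) : Fin (n+2) → ℝ :=
  fun i => if (i : ℕ) = n then -Real.sin s else if (i : ℕ) = n + 1 then Real.cos s else 0

lemma hasDerivAt_e2v (n : ℕ) {θf : ℝ → ℝ} {θ' u : ℝ} (hθ : HasDerivAt θf θ' u) (i : Fin (n+2)) :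
    HasDerivAt (fun t => e2v n (θf t) i) (θ' * e3v n (θf u) i) u := by
  unfold e2v e3v
  split_ifs with h1 h2
  · simpa [Function.comp_def, mul_comm] using (Real.hasDerivAt_cos (θf u)).comp u hθ
  · simpa [Function.comp_def, mul_comm] using (Real.hasDerivAt_sin (θf u)).comp u hθ
  · simpa using hasDerivAt_const u (0:ℝ)

lemma hasDerivAt_e3v (n : ℕ) {θf : ℝ → ℝ} {θ' u : ℝ} (hθ : HasDerivAt θf θ' u) (i : Fin (n+2)) :
    HasDerivAt (fun t => e3v n (θf t) i) (-(θ' * e2v n (θf u) i)) u := by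
  unfold e2v e3v
  split_ifs with h1 h2
  · simpa [Function.comp_def, Pi.neg_def, mul_comm] using ((Real.hasDerivAt_sin (θf u)).comp u hθ).neg
  · simpa [Function.comp_def, mul_comm] using (Real.hasDerivAt_cos (θf u)).comp u hθ
  · simpa using hasDerivAt_const u (0:ℝ)

lemma semiForm_comm (k m : ℕ) (v w : Fin m → ℝ) : semiForm k v w = semiForm k w v := by
  unfold semiForm; exact Finset.sum_congr rfl (fun i _ => by ring)

lemma semiForm_combo (n k : ℕ) (hkn : k ≤ n) (y z : Fin (n+2) → ℝ)
    (hy : ∀ i : Fin (n+2), ((i:ℕ) = n ∨ (i:ℕ) = n+1) → y i = 0)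
    (hz : ∀ i : Fin (n+2), ((i:ℕ) = n ∨ (i:ℕ) = n+1) → z i = 0)
    (s a b c a' b' c' : ℝ) :
    semiForm k (fun i => a * y i + b * e2v n s i + c * e3v n s i)
      (fun i => a' * z i + b' * e2v n s i + c' * e3v n s i)
    = a * a' * semiForm k y z + (b * b' + c * c') := by
  classical
  unfold semiForm
  have key : ∀ i : Fin (n+2),
      (if (i : ℕ) < k then (-1 : ℝ) else 1) * (a * y i + b * e2v n s i + c * e3v n s i) *
        (a' * z i + b' * e2v n s i + c' * e3v n s i)
      = a * a' * ((if (i : ℕ) < k then (-1 : ℝ) else 1) * y i * z i)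
        + (if (i : ℕ) < k then (-1 : ℝ) else 1) * (b * e2v n s i + c * e3v n s i) *
            (b' * e2v n s i + c' * e3v n s i) := by
    intro i
    by_cases hi : (i:ℕ) = n ∨ (i:ℕ) = n+1
    · rw [hy i hi, hz i hi]; ring
    · push_neg at hi
      have h2 : e2v n s i = 0 := by simp [e2v, hi.1, hi.2]
      have h3 : e3v n s i = 0 := by simp [e3v, hi.1, hi.2]
      rw [h2, h3]; ring
  rw [Finset.sum_congr rfl (fun i _ => key i), Finset.sum_add_distrib, ← Finset.mul_sum]
  congr 1
  rw [← Finset.sum_subset (Finset.subset_univ ({⟨n, by omega⟩, ⟨n+1, by omega⟩} : Finset (Fin (n+2)))) ?van]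
  · rw [Finset.sum_insert (by simp [Fin.ext_iff]), Finset.sum_singleton]
    have hn : ¬ ((⟨n, by omega⟩ : Fin (n+2)) : ℕ) < k := by simp; omega
    have hn1 : ¬ ((⟨n+1, by omega⟩ : Fin (n+2)) : ℕ) < k := by simp; omega
    rw [if_neg hn, if_neg hn1]
    simp only [e2v, e3v]
    norm_num
    linear_combination (b*b' + c*c') * (Real.sin_sq_add_cos_sq s)
  · intro x _ hx
    simp only [Finset.mem_insert, Finset.mem_singleton, Fin.ext_iff] at hx
    push_neg at hx
    have h2 : e2v n s x = 0 := by simp [e2v, hx.1, hx.2]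
    have h3 : e3v n s x = 0 := by simp [e3v, hx.1, hx.2]
    rw [h2, h3]; ring

lemma semiForm_combo_left (n k : ℕ) (y z : Fin (n+2) → ℝ)
    (hz : ∀ i : Fin (n+2), ((i:ℕ) = n ∨ (i:ℕ) = n+1) → z i = 0)
    (s a b c : ℝ) :
    semiForm k (fun i => a * y i + b * e2v n s i + c * e3v n s i) z
    = a * semiForm k y z := by
  unfold semiForm
  rw [Finset.mul_sum]
  refine Finset.sum_congr rfl (fun i _ => ?_)
  beta_reduce
  by_cases hi : (i:ℕ) = n ∨ (i:ℕ) = n+1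
  · rw [hz i hi]; ring
  · push_neg at hi
    have h2 : e2v n s i = 0 := by simp [e2v, hi.1, hi.2]
    have h3 : e3v n s i = 0 := by simp [e3v, hi.1, hi.2]
    rw [h2, h3]; ring

set_option maxHeartbeats 2000000 in
/-- Theorem 2.7 of the paper (second family of cmc hypersurfaces of `𝕊_k^{n+1}`).
Coordinates `n+1` and `n+2` of the paper (1-indexed) are indices `n` and `n+1` here. -/
theorem stmt_4 (n k : ℕ) (hn : 2 ≤ n) (hk1 : 1 ≤ k) (hkn : k ≤ n)
    (h c a₁ a₂ t₀ : ℝ) (hc : c < 0) (ht₀ : t₀ ∈ Set.Ioo a₁ a₂)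
    (g lam r θ : ℝ → ℝ)
    (hgdiff : ∀ t ∈ Set.Ioo a₁ a₂, DifferentiableAt ℝ g t)
    (hgpos : ∀ t ∈ Set.Ioo a₁ a₂, 0 < g t)
    (hg' : ∀ t ∈ Set.Ioo a₁ a₂, deriv g t ≠ 0)
    (hode : ∀ t ∈ Set.Ioo a₁ a₂,
      deriv g t ^ 2 = c - g t ^ 2 + g t ^ 2 * (h + g t ^ (-(n : ℤ))) ^ 2)
    (hlam : ∀ t, lam t = h + g t ^ (-(n : ℤ)))
    (hr : ∀ t, r t = g t / Real.sqrt (-c))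
    (hθ : ∀ t, θ t = ∫ τ in t₀..t, r τ * lam τ / (r τ ^ 2 + 1))
    (B₂ B₃ : ℝ → Fin (n + 2) → ℝ)
    (hB₂ : ∀ s i, B₂ s i =
      if (i : ℕ) = n then Real.cos s else if (i : ℕ) = n + 1 then Real.sin s else 0)
    (hB₃ : ∀ s i, B₃ s i =
      if (i : ℕ) = n then -Real.sin s else if (i : ℕ) = n + 1 then Real.cos s else 0) :
    (∀ t ∈ Set.Ioo a₁ a₂, deriv r t ^ 2 - r t ^ 2 * lam t ^ 2 = -1 - r t ^ 2) ∧
    ∀ y : Fin (n + 2) → ℝ,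
      (∀ i : Fin (n + 2), ((i : ℕ) = n ∨ (i : ℕ) = n + 1) → y i = 0) →
      semiForm k y y = -1 →
      ∀ φ ν : ℝ → Fin (n + 2) → ℝ,
        (∀ u, φ u = r u • y + Real.sqrt (r u ^ 2 + 1) • B₂ (θ u)) →
        (∀ u, ν u = (-(r u * lam u)) • y
            - (r u ^ 2 * lam u / Real.sqrt (r u ^ 2 + 1)) • B₂ (θ u)
            - (deriv r u / Real.sqrt (r u ^ 2 + 1)) • B₃ (θ u)) →
        ∀ u ∈ Set.Ioo a₁ a₂,
          semiForm k (φ u) (φ u) = 1 ∧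
          semiForm k (deriv φ u) (deriv φ u) = 1 ∧
          semiForm k (ν u) (ν u) = -1 ∧
          semiForm k (ν u) (deriv φ u) = 0 ∧
          (∀ v : Fin (n + 2) → ℝ,
            (∀ i : Fin (n + 2), ((i : ℕ) = n ∨ (i : ℕ) = n + 1) → v i = 0) →
            semiForm k v y = 0 → semiForm k (ν u) v = 0) ∧
          deriv ν u = (-((n : ℝ) * h - ((n : ℝ) - 1) * lam u)) • deriv φ u := by
  have hs0 : (0:ℝ) < Real.sqrt (-c) := Real.sqrt_pos.mpr (by linarith)
  have hs2 : Real.sqrt (-c) ^ 2 = -c := Real.sq_sqrt (by linarith)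
  set s := Real.sqrt (-c) with hsdef
  have hrfun : r = fun t => g t / s := funext hr
  have hlamfun : lam = fun t => h + g t ^ (-(n:ℤ)) := funext hlam
  have hθfun : θ = fun t => ∫ τ in t₀..t, r τ * lam τ / (r τ ^ 2 + 1) := funext hθ
  have hderivr : ∀ t, deriv r t = deriv g t / s := by
    intro t; rw [hrfun]; exact deriv_div_const s
  have key1 : ∀ t ∈ Set.Ioo a₁ a₂, deriv r t ^ 2 - r t ^ 2 * lam t ^ 2 = -1 - r t ^ 2 := by
    intro t ht
    have h1 : deriv g t ^ 2 = c - g t ^ 2 + g t ^ 2 * lam t ^ 2 := by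
      rw [hlam t]; exact hode t ht
    rw [hderivr t, hr t]
    field_simp [hs0.ne']
    linear_combination h1 + hs2
  refine ⟨key1, ?_⟩
  intro y hy0 hyy φ ν hφ hν u hu
  have hua := hu.1
  have hub := hu.2
  have hIoo : Set.Ioo a₁ a₂ ∈ nhds u := Ioo_mem_nhds hua hub
  have hgu : 0 < g u := hgpos u hu
  have hG0 : deriv g u ≠ 0 := hg' u hu
  have hgd : HasDerivAt g (deriv g u) u := (hgdiff u hu).hasDerivAt
  have hrd : HasDerivAt r (deriv r u) u := by
    have : DifferentiableAt ℝ r u := by rw [hrfun]; exact (hgdiff u hu).div_const s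
    exact this.hasDerivAt
  have hR's : deriv r u = deriv g u / s := hderivr u
  have hRu : r u = g u / s := hr u
  have hgRs : g u = r u * s := by rw [hRu]; field_simp
  have hG's : deriv g u = deriv r u * s := by rw [hR's]; field_simp
  have hRpos : 0 < r u := by rw [hRu]; positivity
  have hR'0 : deriv r u ≠ 0 := by rw [hR's]; exact div_ne_zero hG0 hs0.ne'
  have hP0 : (0:ℝ) < Real.sqrt (r u ^ 2 + 1) := Real.sqrt_pos.mpr (by positivity)
  have hP2 : Real.sqrt (r u ^ 2 + 1) ^ 2 = r u ^ 2 + 1 := Real.sq_sqrt (by positivity)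
  have hLu : lam u = h + g u ^ (-(n:ℤ)) := hlam u
  -- derivative of lam
  have hlamd : HasDerivAt lam (-(n:ℝ) * (lam u - h) * deriv r u / r u) u := by
    have h2 := (hasDerivAt_zpow (-(n:ℤ)) (g u) (Or.inl hgu.ne')).comp u hgd
    have h3 : HasDerivAt lam ((Int.cast (-(n:ℤ)) : ℝ) * g u ^ ((-(n:ℤ)) - 1) * deriv g u) u := by
      rw [hlamfun]; exact h2.const_add h
    convert h3 using 1
    have hga : g u ^ (-(n:ℤ)) = g u ^ ((-(n:ℤ)) - 1) * g u := by
      rw [← zpow_add_one₀ hgu.ne']; norm_num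
    rw [hLu, hR's, hRu, add_sub_cancel_left]
    push_cast
    have hq : deriv g u / s / (g u / s) = deriv g u / g u := by
      field_simp
    rw [mul_div_assoc, hq, hga]
    field_simp
  -- derivative of theta
  have hrc : ContinuousOn r (Set.Ioo a₁ a₂) := by
    rw [hrfun]
    exact fun t ht => ((hgdiff t ht).div_const s).continuousAt.continuousWithinAt
  have hlamc : ContinuousOn lam (Set.Ioo a₁ a₂) := by
    rw [hlamfun]
    exact continuousOn_const.add (ContinuousOn.zpow₀
      (fun t ht => (hgdiff t ht).continuousAt.continuousWithinAt) _
      (fun t ht => Or.inl (hgpos t ht).ne'))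
  have hfc : ContinuousOn (fun τ => r τ * lam τ / (r τ ^ 2 + 1)) (Set.Ioo a₁ a₂) :=
    (hrc.mul hlamc).div ((hrc.pow 2).add continuousOn_const) (fun t ht => by positivity)
  have hθd : HasDerivAt θ (r u * lam u / (r u ^ 2 + 1)) u := by
    rw [hθfun]
    exact intervalIntegral.integral_hasDerivAt_right
      ((hfc.mono ((Set.ordConnected_Ioo).uIcc_subset ht₀ hu)).intervalIntegrable)
      ⟨_, hIoo, hfc.aestronglyMeasurable measurableSet_Ioo⟩
      (hfc.continuousAt hIoo)
  -- derivative of sqrt(r^2+1)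
  have hρd : HasDerivAt (fun t => Real.sqrt (r t ^ 2 + 1))
      (r u * deriv r u / Real.sqrt (r u ^ 2 + 1)) u := by
    have h1 : HasDerivAt (fun t => r t ^ 2 + 1) (2 * r u * deriv r u) u := by
      have := (hrd.pow 2).add_const 1
      refine this.congr_deriv ?_
      all_goals push_cast; ring
    have h2 := (Real.hasDerivAt_sqrt (by positivity : r u ^ 2 + 1 ≠ 0)).comp u h1
    refine h2.congr_deriv ?_
    field_simp [hP0.ne']
  -- E1
  have hE1 : deriv r u ^ 2 = r u ^ 2 * lam u ^ 2 - 1 - r u ^ 2 := by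
    have h1 : deriv g u ^ 2 = c - g u ^ 2 + g u ^ 2 * lam u ^ 2 := by
      rw [hlam u]; exact hode u hu
    rw [hgRs] at h1
    rw [hR's]
    field_simp [hs0.ne']
    linear_combination h1 + hs2
  -- second derivative of r (via Darboux)
  have hr2 : HasDerivAt (deriv r)
      (r u * lam u ^ 2 - r u - (n:ℝ) * r u * lam u * (lam u - h)) u := by
    set w : ℝ → ℝ := fun t => c - g t ^ 2 + g t ^ 2 * lam t ^ 2 with hwdef
    have hsq : ∀ t ∈ Set.Ioo a₁ a₂, deriv g t ^ 2 = w t := by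
      intro t ht
      show deriv g t ^ 2 = c - g t ^ 2 + g t ^ 2 * lam t ^ 2
      rw [hlam t]; exact hode t ht
    have hwd : HasDerivAt w
        (-(2 * g u ^ 1 * deriv g u) + (2 * g u ^ 1 * deriv g u * lam u ^ 2
          + g u ^ 2 * (2 * lam u ^ 1 * (-(n:ℝ) * (lam u - h) * deriv r u / r u)))) u := by
      have := ((hgd.pow 2).const_sub c).add ((hgd.pow 2).mul (hlamd.pow 2))
      refine this.congr_deriv ?_
      all_goals push_cast [Pi.pow_apply]; ring
    have hwu : w u = deriv g u ^ 2 := (hsq u hu).symm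
    have hwu0 : w u ≠ 0 := by rw [hwu]; exact pow_ne_zero 2 hG0
    have hswd := (Real.hasDerivAt_sqrt hwu0).comp u hwd
    have hdar := hasDerivWithinAt_forall_lt_or_forall_gt_of_forall_ne (convex_Ioo a₁ a₂)
      (f' := deriv g) (fun t ht => (hgdiff t ht).hasDerivAt.hasDerivWithinAt) (m := 0) hg'
    have hgdd : HasDerivAt (deriv g)
        ((r u * lam u ^ 2 - r u - (n:ℝ) * r u * lam u * (lam u - h)) * s) u := by
      rcases hdar with hneg | hpos
      · have heq : deriv g =ᶠ[nhds u] (fun t => -Real.sqrt (w t)) :=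
          Filter.eventuallyEq_of_mem hIoo (fun t ht => by
            rw [← hsq t ht, Real.sqrt_sq_eq_abs, abs_of_neg (hneg t ht), neg_neg])
        have H := hswd.neg.congr_of_eventuallyEq heq
        refine H.congr_deriv ?_
        have hwuv : Real.sqrt (w u) = -(deriv g u) := by
          rw [hwu, Real.sqrt_sq_eq_abs, abs_of_neg (hneg u hu)]
        rw [hwuv, hG's, hgRs]
        field_simp [hR'0, hRpos.ne']
        try ring
      · have heq : deriv g =ᶠ[nhds u] (fun t => Real.sqrt (w t)) :=
          Filter.eventuallyEq_of_mem hIoo (fun t ht => by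
            rw [← hsq t ht, Real.sqrt_sq_eq_abs, abs_of_pos (hpos t ht)])
        have H := hswd.congr_of_eventuallyEq heq
        refine H.congr_deriv ?_
        have hwuv : Real.sqrt (w u) = deriv g u := by
          rw [hwu, Real.sqrt_sq_eq_abs, abs_of_pos (hpos u hu)]
        rw [hwuv, hG's, hgRs]
        field_simp [hR'0, hRpos.ne']
        try ring
    have H2 := hgdd.div_const s
    have H3 : HasDerivAt (fun t => deriv g t / s)
        (r u * lam u ^ 2 - r u - (n:ℝ) * r u * lam u * (lam u - h)) u := by
      refine H2.congr_deriv ?_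
      rw [mul_div_assoc, div_self hs0.ne', mul_one]
    exact H3.congr_of_eventuallyEq (Filter.Eventually.of_forall hderivr)
  -- φ machinery
  have hφcomp : ∀ i : Fin (n+2), (fun t => φ t i)
      = fun t => r t * y i + Real.sqrt (r t ^ 2 + 1) * e2v n (θ t) i := by
    intro i; funext t
    rw [hφ t]
    simp only [Pi.add_apply, Pi.smul_apply, smul_eq_mul, hB₂, e2v]
  have hΦd : HasDerivAt φ (fun i => deriv r u * y i + (r u * deriv r u / Real.sqrt (r u ^ 2 + 1) * e2v n (θ u) i + Real.sqrt (r u ^ 2 + 1) * (r u * lam u / (r u ^ 2 + 1) * e3v n (θ u) i))) u := by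
    rw [hasDerivAt_pi]
    intro i
    rw [hφcomp i]
    exact (hrd.mul_const (y i)).add (hρd.mul (hasDerivAt_e2v n hθd i))
  have hΦclean : (fun i => deriv r u * y i + (r u * deriv r u / Real.sqrt (r u ^ 2 + 1) * e2v n (θ u) i + Real.sqrt (r u ^ 2 + 1) * (r u * lam u / (r u ^ 2 + 1) * e3v n (θ u) i))) = (fun i => deriv r u * y i + r u * deriv r u / Real.sqrt (r u ^ 2 + 1) * e2v n (θ u) i + r u * lam u / Real.sqrt (r u ^ 2 + 1) * e3v n (θ u) i) := by
    funext i
    field_simp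
    linear_combination (r u * lam u * e3v n (θ u) i) * hP2
  rw [hΦclean] at hΦd
  have hderφ : deriv φ u = (fun i => deriv r u * y i + r u * deriv r u / Real.sqrt (r u ^ 2 + 1) * e2v n (θ u) i + r u * lam u / Real.sqrt (r u ^ 2 + 1) * e3v n (θ u) i) := hΦd.deriv
  -- ν machinery
  have hνcomp : ∀ i : Fin (n+2), (fun t => ν t i)
      = fun t => -(r t * lam t) * y i
        + (-(r t ^ 2 * lam t / Real.sqrt (r t ^ 2 + 1)) * e2v n (θ t) i
          + -(deriv r t / Real.sqrt (r t ^ 2 + 1)) * e3v n (θ t) i) := by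
    intro i; funext t
    rw [hν t]
    simp only [Pi.sub_apply, Pi.add_apply, Pi.smul_apply, Pi.neg_apply, smul_eq_mul,
      hB₂, hB₃, e2v, e3v]
    split_ifs <;> ring
  have hA : HasDerivAt (fun t => -(r t * lam t))
      (-(deriv r u * lam u + r u * (-(n:ℝ) * (lam u - h) * deriv r u / r u))) u := (hrd.mul hlamd).neg
  have hB : HasDerivAt (fun t => -(r t ^ 2 * lam t / Real.sqrt (r t ^ 2 + 1)))
      (-((((((2:ℕ):ℝ) * r u ^ (2-1) * deriv r u) * lam u + r u ^ 2 * (-(n:ℝ) * (lam u - h) * deriv r u / r u)) * Real.sqrt (r u ^ 2 + 1) - r u ^ 2 * lam u * (r u * deriv r u / Real.sqrt (r u ^ 2 + 1))) / Real.sqrt (r u ^ 2 + 1) ^ 2)) u := (((hrd.pow 2).mul hlamd).div hρd hP0.ne').neg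
  have hC : HasDerivAt (fun t => -(deriv r t / Real.sqrt (r t ^ 2 + 1)))
      (-(((r u * lam u ^ 2 - r u - (n:ℝ) * r u * lam u * (lam u - h)) * Real.sqrt (r u ^ 2 + 1) - deriv r u * (r u * deriv r u / Real.sqrt (r u ^ 2 + 1))) / Real.sqrt (r u ^ 2 + 1) ^ 2)) u := (hr2.div hρd hP0.ne').neg
  have hNd : HasDerivAt ν (fun i => (-(deriv r u * lam u + r u * (-(n:ℝ) * (lam u - h) * deriv r u / r u))) * y i + (((-((((((2:ℕ):ℝ) * r u ^ (2-1) * deriv r u) * lam u + r u ^ 2 * (-(n:ℝ) * (lam u - h) * deriv r u / r u)) * Real.sqrt (r u ^ 2 + 1) - r u ^ 2 * lam u * (r u * deriv r u / Real.sqrt (r u ^ 2 + 1))) / Real.sqrt (r u ^ 2 + 1) ^ 2)) * e2v n (θ u) i + -(r u ^ 2 * lam u / Real.sqrt (r u ^ 2 + 1)) * (r u * lam u / (r u ^ 2 + 1) * e3v n (θ u) i)) + ((-(((r u * lam u ^ 2 - r u - (n:ℝ) * r u * lam u * (lam u - h)) * Real.sqrt (r u ^ 2 + 1) - deriv r u *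 (r u * deriv r u / Real.sqrt (r u ^ 2 + 1))) / Real.sqrt (r u ^ 2 + 1) ^ 2)) * e3v n (θ u) i + -(deriv r u / Real.sqrt (r u ^ 2 + 1)) * -(r u * lam u / (r u ^ 2 + 1) * e2v n (θ u) i)))) u := by
    rw [hasDerivAt_pi]
    intro i
    rw [hνcomp i]
    exact (hA.mul_const (y i)).add
      ((hB.mul (hasDerivAt_e2v n hθd i)).add (hC.mul (hasDerivAt_e3v n hθd i)))
  have hNeq : (fun i => (-(deriv r u * lam u + r u * (-(n:ℝ) * (lam u - h) * deriv r u / r u))) * y i + (((-((((((2:ℕ):ℝ) * r u ^ (2-1) * deriv r u) * lam u + r u ^ 2 * (-(n:ℝ) * (lam u - h) * deriv r u / r u)) * Real.sqrt (r u ^ 2 + 1) - r u ^ 2 * lam u * (r u * deriv r u / Real.sqrt (r u ^ 2 + 1))) / Real.sqrt (r u ^ 2 + 1) ^ 2)) * e2v n (θ u) i + -(r u ^ 2 * lam u / Real.sqrt (r u ^ 2 + 1)) * (r u * lam u / (r u ^ 2 + 1) * e3v n (θ u) i)) + ((-(((r u * lam u ^ 2 - r u - (n:ℝ) * r u * lam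 u * (lam u - h)) * Real.sqrt (r u ^ 2 + 1) - deriv r u * (r u * deriv r u / Real.sqrt (r u ^ 2 + 1))) / Real.sqrt (r u ^ 2 + 1) ^ 2)) * e3v n (θ u) i + -(deriv r u / Real.sqrt (r u ^ 2 + 1)) * -(r u * lam u / (r u ^ 2 + 1) * e2v n (θ u) i)))) = (-((n : ℝ) * h - ((n : ℝ) - 1) * lam u)) • (fun i => deriv r u * y i + r u * deriv r u / Real.sqrt (r u ^ 2 + 1) * e2v n (θ u) i + r u * lam u / Real.sqrt (r u ^ 2 + 1) * e3v n (θ u) i) := by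
    funext i
    simp only [Pi.smul_apply, smul_eq_mul]
    field_simp
    have hdk : ∀ m : ℕ, deriv r u ^ (m + 2) = deriv r u ^ m * (r u ^ 2 * lam u ^ 2 - 1 - r u ^ 2) :=
      fun m => by rw [pow_add, hE1]
    generalize Real.sqrt (r u ^ 2 + 1) = q at hP2 ⊢
    have hqk : ∀ m : ℕ, q ^ (m + 2) = q ^ m * (r u ^ 2 + 1) :=
      fun m => by rw [pow_add, hP2]
    ring_nf
    simp only [(show q ^ 2 = _ from hqk 0), (show q ^ 3 = _ from hqk 1), (show q ^ 4 = _ from hqk 2), (show q ^ 5 = _ from hqk 3), (show q ^ 6 = _ from hqk 4), (show q ^ 7 = _ from hqk 5), (show q ^ 8 = _ from hqk 6), (show q ^ 9 = _ from hqk 7), (show q ^ 10 = _ from hqk 8),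
      (show deriv r u ^ 2 = _ from hdk 0), (show deriv r u ^ 3 = _ from hdk 1), (show deriv r u ^ 4 = _ from hdk 2), (show deriv r u ^ 5 = _ from hdk 3), (show deriv r u ^ 6 = _ from hdk 4)]
    ring_nf
  rw [hNeq] at hNd
  -- forms of φ u and ν u
  have hφu2 : φ u = fun i => r u * y i + Real.sqrt (r u ^ 2 + 1) * e2v n (θ u) i
      + 0 * e3v n (θ u) i := by
    funext i
    rw [hφ u]
    simp only [Pi.add_apply, Pi.smul_apply, smul_eq_mul, hB₂, e2v, e3v]
    split_ifs <;> ring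
  have hνu2 : ν u = fun i => -(r u * lam u) * y i
      + -(r u ^ 2 * lam u / Real.sqrt (r u ^ 2 + 1)) * e2v n (θ u) i
      + -(deriv r u / Real.sqrt (r u ^ 2 + 1)) * e3v n (θ u) i := by
    funext i
    rw [hν u]
    simp only [Pi.sub_apply, Pi.add_apply, Pi.smul_apply, Pi.neg_apply, smul_eq_mul,
      hB₂, hB₃, e2v, e3v]
    split_ifs <;> ring
  have hderφ2 : deriv φ u = fun i => deriv r u * y i + r u * deriv r u / Real.sqrt (r u ^ 2 + 1) * e2v n (θ u) i
      + r u * lam u / Real.sqrt (r u ^ 2 + 1) * e3v n (θ u) i := by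
    rw [hderφ]
  refine ⟨?_, ?_, ?_, ?_, ?_, ?_⟩
  · rw [hφu2, semiForm_combo n k hkn y y hy0 hy0, hyy]
    linear_combination hP2
  · rw [hderφ2, semiForm_combo n k hkn y y hy0 hy0, hyy]
    field_simp
    linear_combination -hE1 - (1 + deriv r u ^ 2) * hP2
  · rw [hνu2, semiForm_combo n k hkn y y hy0 hy0, hyy]
    field_simp
    linear_combination hE1 + (1 - r u ^ 2 * lam u ^ 2) * hP2
  · rw [hνu2, hderφ2, semiForm_combo n k hkn y y hy0 hy0, hyy]
    field_simp
    linear_combination (r u * lam u * deriv r u) * hP2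
  · intro v hv0 hvy
    rw [hνu2, semiForm_combo_left n k y v hv0]
    have hyv : semiForm k y v = 0 := by rw [semiForm_comm]; exact hvy
    rw [hyv, mul_zero]
  · rw [hderφ]
    exact hNd.deriv
end

section
/- Let $n\ge 2$ and $0\le k\le n$ be integers, $h\in\mathbb{R}$, $c>0$, and let $g:(a_1,a_2)\to\mathbb{R}$ be differentiable with $0<g(t)<\sqrt{c}$, $g'(t)\ne 0$, and $(g'(t))^2 = c - g(t)^2 - g(t)^2\,(h+g(t)^{-n})^2$ for all $t$. Set $\lambda = h+g^{-n}$, $r = g/\sqrt{c}$, fix $t_0\in(a_1,a_2)$ and let $\theta(t)=\int_{t_0}^t \frac{r(\tau)\lambda(\tau)}{1-r(\tau)^2}\,d\tau$. Let $B_2(s)\in\mathbb{R}^{n+2}$ have $\cos s$ in coordinate $n+1$, $\sin s$ in coordinate $n+2$ and $0$ elsewhere, and $B_3(s)$ have $-\sin s$ in coordinate $n+1$, $\cos s$ in coordinate $n+2$ and $0$ elsewhere. Then $(r')^2 + r^2\lambda^2 = 1 - r^2$ on $(a_1,a_2)$, and for every $y\in\mathbb{R}^{n+2}$ with $y_{n+1}=y_{n+2}=0$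 and $\langle y,y\rangle = 1$, the curves $\phi(u) = r(u)\,y + \sqrt{1-r(u)^2}\,B_2(\theta(u))$ and $\nu(u) = -r(u)\lambda(u)\,y + \frac{r(u)^2\lambda(u)}{\sqrt{1-r(u)^2}}\,B_2(\theta(u)) + \frac{r'(u)}{\sqrt{1-r(u)^2}}\,B_3(\theta(u))$ satisfy: $\langle\phi,\phi\rangle\equiv 1$, $\langle\phi',\phi'\rangle\equiv 1$, $\langle\nu,\nu\rangle\equiv 1$, $\langle\nu,\phi'\rangle\equiv 0$, $\langle\nu(u),v\rangle = 0$ for every $v\in\mathbb{R}^{n+2}$ with $v_{n+1}=v_{n+2}=0$ and $\langle v,y\rangle = 0$, and $\nu'(u) = -(nh-(n-1)\lambda(u))\,\phi'(u)$ for all $u$. -/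
lemma semiForm_split {n k : ℕ} (hkn : k ≤ n) (v w : Fin (n+2) → ℝ) :
    semiForm k v w = (∑ i : Fin n,
        (if (i : ℕ) < k then (-1 : ℝ) else 1) * v (i.castSucc.castSucc) * w (i.castSucc.castSucc))
      + (v ⟨n, by omega⟩ * w ⟨n, by omega⟩ + v ⟨n+1, by omega⟩ * w ⟨n+1, by omega⟩) := by
  unfold semiForm
  rw [Fin.sum_univ_castSucc, Fin.sum_univ_castSucc]
  have h1 : ¬ ((Fin.last (n+1) : ℕ) < k) := by simp [Fin.last]; omega
  have h2 : ¬ (((Fin.last n).castSucc : ℕ) < k) := by simp [Fin.last]; omega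
  rw [if_neg h1, if_neg h2]
  have e1 : (Fin.last (n+1)) = (⟨n+1, by omega⟩ : Fin (n+2)) := rfl
  have e2 : ((Fin.last n).castSucc) = (⟨n, by omega⟩ : Fin (n+2)) := rfl
  rw [e1, e2]
  simp only [Fin.coe_castSucc]
  ring

lemma semiForm_key {n k : ℕ} (hkn : k ≤ n) (y : Fin (n+2) → ℝ)
    (hy : ∀ i : Fin (n+2), ((i:ℕ) = n ∨ (i:ℕ) = n+1) → y i = 0)
    (cs sn a₁ b₁ c₁ a₂ b₂ c₂ : ℝ) (hcs : cs^2 + sn^2 = 1)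
    (w₁ w₂ : Fin (n+2) → ℝ)
    (hw₁ : ∀ i : Fin (n+2), w₁ i = a₁ * y i
      + b₁ * (if (i:ℕ) = n then cs else if (i:ℕ) = n+1 then sn else 0)
      + c₁ * (if (i:ℕ) = n then -sn else if (i:ℕ) = n+1 then cs else 0))
    (hw₂ : ∀ i : Fin (n+2), w₂ i = a₂ * y i
      + b₂ * (if (i:ℕ) = n then cs else if (i:ℕ) = n+1 then sn else 0)
      + c₂ * (if (i:ℕ) = n then -sn else if (i:ℕ) = n+1 then cs else 0)) :
    semiForm k w₁ w₂ = a₁*a₂* semiForm k y y + (b₁*b₂ + c₁*c₂) := by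
  rw [semiForm_split hkn, semiForm_split hkn]
  have hsum : ∀ i : Fin n,
      (if (i : ℕ) < k then (-1:ℝ) else 1) * w₁ (i.castSucc.castSucc) * w₂ (i.castSucc.castSucc)
      = a₁*a₂*((if (i : ℕ) < k then (-1:ℝ) else 1) * y (i.castSucc.castSucc) * y (i.castSucc.castSucc)) := by
    intro i
    have h1 : ((i.castSucc.castSucc : Fin (n+2)) : ℕ) ≠ n := by simp; omega
    have h2 : ((i.castSucc.castSucc : Fin (n+2)) : ℕ) ≠ n+1 := by simp; omega
    simp only [hw₁, hw₂, if_neg h1, if_neg h2]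
    ring
  rw [Finset.sum_congr rfl (fun i _ => hsum i), ← Finset.mul_sum]
  have hyn : y ⟨n, by omega⟩ = 0 := hy _ (Or.inl rfl)
  have hyn1 : y ⟨n+1, by omega⟩ = 0 := hy _ (Or.inr rfl)
  rw [hw₁ ⟨n, by omega⟩, hw₂ ⟨n, by omega⟩, hw₁ ⟨n+1, by omega⟩, hw₂ ⟨n+1, by omega⟩]
  simp only [hyn, hyn1]
  norm_num
  linear_combination (b₁*b₂ + c₁*c₂) * hcs

lemma semiForm_orth {n k : ℕ} (hkn : k ≤ n) (y v : Fin (n+2) → ℝ)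
    (hv : ∀ i : Fin (n+2), ((i:ℕ) = n ∨ (i:ℕ) = n+1) → v i = 0)
    (hvy : semiForm k v y = 0)
    (cs sn a₁ b₁ c₁ : ℝ)
    (w₁ : Fin (n+2) → ℝ)
    (hw₁ : ∀ i : Fin (n+2), w₁ i = a₁ * y i
      + b₁ * (if (i:ℕ) = n then cs else if (i:ℕ) = n+1 then sn else 0)
      + c₁ * (if (i:ℕ) = n then -sn else if (i:ℕ) = n+1 then cs else 0)) :
    semiForm k w₁ v = 0 := by
  have key : semiForm k w₁ v = a₁ * semiForm k v y := by
    rw [semiForm_split hkn, semiForm_split hkn]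
    have hvn : v ⟨n, by omega⟩ = 0 := hv _ (Or.inl rfl)
    have hvn1 : v ⟨n+1, by omega⟩ = 0 := hv _ (Or.inr rfl)
    rw [hvn, hvn1]
    simp only [mul_zero, zero_mul, add_zero, zero_add, mul_add, Finset.mul_sum]
    refine Finset.sum_congr rfl fun i _ => ?_
    have h1 : ((i.castSucc.castSucc : Fin (n+2)) : ℕ) ≠ n := by simp; omega
    have h2 : ((i.castSucc.castSucc : Fin (n+2)) : ℕ) ≠ n+1 := by simp; omega
    rw [hw₁, if_neg h1, if_neg h2, if_neg h1, if_neg h2]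
    ring
  rw [key, hvy, mul_zero]

set_option maxHeartbeats 2000000 in
/-- Theorem 2.10 of the paper (third family of cmc hypersurfaces of `𝕊_k^{n+1}`).
Coordinates `n+1` and `n+2` of the paper (1-indexed) are indices `n` and `n+1` here. -/
theorem stmt_5 (n k : ℕ) (hn : 2 ≤ n) (hkn : k ≤ n)
    (h c a₁ a₂ t₀ : ℝ) (hc : 0 < c) (ht₀ : t₀ ∈ Set.Ioo a₁ a₂)
    (g lam r θ : ℝ → ℝ)
    (hgdiff : ∀ t ∈ Set.Ioo a₁ a₂, DifferentiableAt ℝ g t)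
    (hgpos : ∀ t ∈ Set.Ioo a₁ a₂, 0 < g t)
    (hgc : ∀ t ∈ Set.Ioo a₁ a₂, g t < Real.sqrt c)
    (hg' : ∀ t ∈ Set.Ioo a₁ a₂, deriv g t ≠ 0)
    (hode : ∀ t ∈ Set.Ioo a₁ a₂,
      deriv g t ^ 2 = c - g t ^ 2 - g t ^ 2 * (h + g t ^ (-(n : ℤ))) ^ 2)
    (hlam : ∀ t, lam t = h + g t ^ (-(n : ℤ)))
    (hr : ∀ t, r t = g t / Real.sqrt c)
    (hθ : ∀ t, θ t = ∫ τ in t₀..t, r τ * lam τ / (1 - r τ ^ 2))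
    (B₂ B₃ : ℝ → Fin (n + 2) → ℝ)
    (hB₂ : ∀ s i, B₂ s i =
      if (i : ℕ) = n then Real.cos s else if (i : ℕ) = n + 1 then Real.sin s else 0)
    (hB₃ : ∀ s i, B₃ s i =
      if (i : ℕ) = n then -Real.sin s else if (i : ℕ) = n + 1 then Real.cos s else 0) :
    (∀ t ∈ Set.Ioo a₁ a₂, deriv r t ^ 2 + r t ^ 2 * lam t ^ 2 = 1 - r t ^ 2) ∧
    ∀ y : Fin (n + 2) → ℝ,
      (∀ i : Fin (n + 2), ((i : ℕ) = n ∨ (i : ℕ) = n + 1) → y i = 0) →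
      semiForm k y y = 1 →
      ∀ φ ν : ℝ → Fin (n + 2) → ℝ,
        (∀ u, φ u = r u • y + Real.sqrt (1 - r u ^ 2) • B₂ (θ u)) →
        (∀ u, ν u = (-(r u * lam u)) • y
            + (r u ^ 2 * lam u / Real.sqrt (1 - r u ^ 2)) • B₂ (θ u)
            + (deriv r u / Real.sqrt (1 - r u ^ 2)) • B₃ (θ u)) →
        ∀ u ∈ Set.Ioo a₁ a₂,
          semiForm k (φ u) (φ u) = 1 ∧
          semiForm k (deriv φ u) (deriv φ u) = 1 ∧
          semiForm k (ν u) (ν u) = 1 ∧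
          semiForm k (ν u) (deriv φ u) = 0 ∧
          (∀ v : Fin (n + 2) → ℝ,
            (∀ i : Fin (n + 2), ((i : ℕ) = n ∨ (i : ℕ) = n + 1) → v i = 0) →
            semiForm k v y = 0 → semiForm k (ν u) v = 0) ∧
          deriv ν u = (-((n : ℝ) * h - ((n : ℝ) - 1) * lam u)) • deriv φ u := by
  have hIopen : IsOpen (Set.Ioo a₁ a₂) := isOpen_Ioo
  have hsc : 0 < Real.sqrt c := Real.sqrt_pos.2 hc
  have hcsq : Real.sqrt c ^ 2 = c := Real.sq_sqrt hc.le
  have hrfun : r = fun t => g t / Real.sqrt c := funext hr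
  have hlamfun : lam = fun t => h + g t ^ (-(n:ℤ)) := funext hlam
  have hr0 : ∀ t ∈ Set.Ioo a₁ a₂, 0 < r t := fun t ht => by
    rw [hr]; exact div_pos (hgpos t ht) hsc
  have hr1 : ∀ t ∈ Set.Ioo a₁ a₂, r t < 1 := fun t ht => by
    rw [hr]; exact (div_lt_one hsc).2 (hgc t ht)
  have h1r : ∀ t ∈ Set.Ioo a₁ a₂, 0 < 1 - r t ^ 2 := fun t ht => by
    nlinarith [hr0 t ht, hr1 t ht]
  have hgz : ∀ t ∈ Set.Ioo a₁ a₂, g t ≠ 0 := fun t ht => (hgpos t ht).ne'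
  have hrD : ∀ t ∈ Set.Ioo a₁ a₂, HasDerivAt r (deriv g t / Real.sqrt c) t := fun t ht => by
    rw [hrfun]; exact ((hgdiff t ht).hasDerivAt).div_const _
  have hr'eq : ∀ t ∈ Set.Ioo a₁ a₂, deriv r t = deriv g t / Real.sqrt c :=
    fun t ht => (hrD t ht).deriv
  have hr'ne : ∀ t ∈ Set.Ioo a₁ a₂, deriv r t ≠ 0 := fun t ht => by
    rw [hr'eq t ht]; exact div_ne_zero (hg' t ht) hsc.ne'
  have hlamD : ∀ t ∈ Set.Ioo a₁ a₂,
      HasDerivAt lam (((-(n:ℤ)) : ℝ) * g t ^ ((-(n:ℤ)) - 1) * deriv g t) t := fun t ht => by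
    rw [hlamfun]
    have h2 : HasDerivAt (fun t => g t ^ (-(n:ℤ)))
        (((-(n:ℤ)) : ℝ) * g t ^ ((-(n:ℤ))-1) * deriv g t) t := by
      have := (hasDerivAt_zpow (-(n:ℤ)) (g t) (Or.inl (hgz t ht))).comp t (hgdiff t ht).hasDerivAt
      simpa [mul_assoc, Function.comp_def] using this
    simpa using (hasDerivAt_const t h).fun_add h2
  have hrL : ∀ t ∈ Set.Ioo a₁ a₂,
      r t * deriv lam t = -(n:ℝ) * (lam t - h) * deriv r t := fun t ht => by
    rw [(hlamD t ht).deriv, hr'eq t ht, hr t]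
    have hlh : lam t - h = g t ^ (-(n:ℤ)) := by rw [hlam]; ring
    rw [hlh]
    have hz : g t ^ ((-(n:ℤ)) - 1) = g t ^ (-(n:ℤ)) / g t := by
      rw [zpow_sub_one₀ (hgz t ht)]; rfl
    have hzp : g t ^ (-(n:ℤ)) = (g t ^ n)⁻¹ := by rw [zpow_neg, zpow_natCast]
    rw [hz, hzp]
    have hgz' : g t ≠ 0 := hgz t ht
    have hgn : g t ^ n ≠ 0 := pow_ne_zero _ hgz'
    field_simp
    push_cast
    ring
  have claim1 : ∀ t ∈ Set.Ioo a₁ a₂,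
      deriv r t ^ 2 + r t ^ 2 * lam t ^ 2 = 1 - r t ^ 2 := fun t ht => by
    have h0 := hode t ht
    have hzp : g t ^ (-(n:ℤ)) = (g t ^ n)⁻¹ := by rw [zpow_neg, zpow_natCast]
    rw [hzp] at h0
    rw [hr'eq t ht, hr t, hlam t, hzp, div_pow, div_pow, hcsq]
    have hgz' : g t ≠ 0 := hgz t ht
    have hgn : g t ^ n ≠ 0 := pow_ne_zero _ hgz'
    have hc0 : c ≠ 0 := hc.ne'
    rw [h0]
    field_simp
    ring
  -- Darboux: deriv g has constant sign
  obtain ⟨ε, hε⟩ : ∃ ε : ℝ, ∀ t ∈ Set.Ioo a₁ a₂,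
      deriv g t = ε * Real.sqrt (c - g t ^ 2 - g t ^ 2 * (h + g t ^ (-(n:ℤ))) ^ 2) := by
    rcases hasDerivWithinAt_forall_lt_or_forall_gt_of_forall_ne (convex_Ioo a₁ a₂)
        (fun t ht => ((hgdiff t ht).hasDerivAt.hasDerivWithinAt)) hg' with hneg | hpos
    · refine ⟨-1, fun t ht => ?_⟩
      rw [← hode t ht, Real.sqrt_sq_eq_abs, abs_of_neg (hneg t ht)]; ring
    · refine ⟨1, fun t ht => ?_⟩
      rw [← hode t ht, Real.sqrt_sq_eq_abs, abs_of_pos (hpos t ht)]; ring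
  have hg'diff : ∀ t ∈ Set.Ioo a₁ a₂, DifferentiableAt ℝ (deriv g) t := fun t ht => by
    have hin : DifferentiableAt ℝ (fun x => c - g x ^ 2 - g x ^ 2 * (h + g x ^ (-(n:ℤ))) ^ 2) t := by
      have hg := hgdiff t ht
      have hz : DifferentiableAt ℝ (fun x => g x ^ (-(n:ℤ))) t :=
        (differentiableAt_zpow.2 (Or.inl (hgz t ht))).comp t hg
      exact ((differentiableAt_const c).sub (hg.pow 2)).sub
        ((hg.pow 2).mul (((differentiableAt_const h).add hz).pow 2))
    have hform : DifferentiableAt ℝ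
        (fun x => ε * Real.sqrt (c - g x ^ 2 - g x ^ 2 * (h + g x ^ (-(n:ℤ))) ^ 2)) t := by
      refine DifferentiableAt.const_mul ?_ ε
      refine hin.sqrt ?_
      rw [← hode t ht]
      exact pow_ne_zero _ (hg' t ht)
    refine hform.congr_of_eventuallyEq ?_
    exact Filter.eventuallyEq_of_mem (hIopen.mem_nhds ht) (fun x hx => hε x hx)
  have hr'diff : ∀ t ∈ Set.Ioo a₁ a₂, DifferentiableAt ℝ (deriv r) t := fun t ht => by
    refine DifferentiableAt.congr_of_eventuallyEq ((hg'diff t ht).div_const (Real.sqrt c)) ?_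
    exact Filter.eventuallyEq_of_mem (hIopen.mem_nhds ht) (fun x hx => hr'eq x hx)
  have hr'' : ∀ t ∈ Set.Ioo a₁ a₂, deriv (deriv r) t
      = -(r t) - r t * lam t ^ 2 + (n:ℝ) * r t * lam t * (lam t - h) := fun t ht => by
    have hRD : HasDerivAt (deriv r) (deriv (deriv r) t) t := (hr'diff t ht).hasDerivAt
    have hrdu : HasDerivAt r (deriv r t) t := (hrD t ht).differentiableAt.hasDerivAt
    have hldu : HasDerivAt lam (deriv lam t) t := (hlamD t ht).differentiableAt.hasDerivAt
    have hL : HasDerivAt (fun x => deriv r x ^ 2) (2 * deriv r t * deriv (deriv r) t) t := by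
      simpa [mul_assoc] using hRD.fun_pow 2
    have hRHS : HasDerivAt (fun x => 1 - r x ^ 2 - r x ^ 2 * lam x ^ 2)
        (-(2 * r t * deriv r t)
          - (2 * r t * deriv r t * lam t ^ 2 + r t ^ 2 * (2 * lam t * deriv lam t))) t := by
      have := ((hasDerivAt_const t (1:ℝ)).fun_sub (hrdu.fun_pow 2)).fun_sub
        ((hrdu.fun_pow 2).fun_mul (hldu.fun_pow 2))
      refine this.congr_deriv ?_
      ring
    have heq : (fun x => 1 - r x ^ 2 - r x ^ 2 * lam x ^ 2) =ᶠ[nhds t]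
        (fun x => deriv r x ^ 2) := by
      filter_upwards [hIopen.mem_nhds ht] with x hx
      have := claim1 x hx; linarith
    have hE := (hL.congr_of_eventuallyEq heq).unique hRHS
    have h2 : (2 : ℝ) * deriv r t ≠ 0 := mul_ne_zero two_ne_zero (hr'ne t ht)
    apply mul_left_cancel₀ h2
    have hrl := hrL t ht
    rw [hE]
    linear_combination (-2 : ℝ) * r t * lam t * hrl
  have hθD : ∀ t ∈ Set.Ioo a₁ a₂,
      HasDerivAt θ (r t * lam t / (1 - r t ^ 2)) t := fun t ht => by
    have hθfun : θ = fun u => ∫ τ in t₀..u, r τ * lam τ / (1 - r τ ^ 2) := funext hθ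
    rw [hθfun]
    have hcont : ∀ x ∈ Set.Ioo a₁ a₂,
        ContinuousAt (fun τ => r τ * lam τ / (1 - r τ ^ 2)) x := fun x hx => by
      have hrc : ContinuousAt r x := (hrD x hx).differentiableAt.continuousAt
      have hlc : ContinuousAt lam x := (hlamD x hx).differentiableAt.continuousAt
      exact (hrc.mul hlc).div (continuousAt_const.sub (hrc.pow 2)) (h1r x hx).ne'
    refine intervalIntegral.integral_hasDerivAt_right ?_
      (ContinuousAt.stronglyMeasurableAtFilter hIopen hcont t ht) (hcont t ht)
    apply ContinuousOn.intervalIntegrable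
    intro x hx
    have hxI : x ∈ Set.Ioo a₁ a₂ :=
      Set.OrdConnected.uIcc_subset Set.ordConnected_Ioo ht₀ ht hx
    exact (hcont x hxI).continuousWithinAt
  refine ⟨fun t ht => claim1 t ht, ?_⟩
  intro y hy hyy φ ν hφ hν u hu
  have hcs : Real.cos (θ u) ^ 2 + Real.sin (θ u) ^ 2 = 1 := Real.cos_sq_add_sin_sq (θ u)
  have h1ru : 0 < 1 - r u ^ 2 := h1r u hu
  have hS2 : Real.sqrt (1 - r u ^ 2) ^ 2 = 1 - r u ^ 2 := Real.sq_sqrt h1ru.le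
  have hSpos : 0 < Real.sqrt (1 - r u ^ 2) := Real.sqrt_pos.2 h1ru
  have hSne : Real.sqrt (1 - r u ^ 2) ≠ 0 := hSpos.ne'
  have hrdu : HasDerivAt r (deriv r u) u := (hrD u hu).differentiableAt.hasDerivAt
  have hldu : HasDerivAt lam (deriv lam u) u := (hlamD u hu).differentiableAt.hasDerivAt
  have hθu : HasDerivAt θ (r u * lam u / (1 - r u ^ 2)) u := hθD u hu
  have hr''u : HasDerivAt (deriv r) (deriv (deriv r) u) u := (hr'diff u hu).hasDerivAt
  have hode1 := claim1 u hu
  have hrlu := hrL u hu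
  have hq := hr'' u hu
  have hsu : HasDerivAt (fun t => Real.sqrt (1 - r t ^ 2)) (-(r u * deriv r u) / Real.sqrt (1 - r u ^ 2)) u := by
    have h0 := ((hasDerivAt_const u (1:ℝ)).fun_sub (hrdu.fun_pow 2)).sqrt h1ru.ne'
    convert h0 using 1
    field_simp
    ring
  have hφD : HasDerivAt φ (fun i => deriv r u * y i
      + (-(r u * deriv r u) / Real.sqrt (1 - r u ^ 2)) * B₂ (θ u) i
      + (Real.sqrt (1 - r u ^ 2) * (r u * lam u / (1 - r u ^ 2))) * B₃ (θ u) i) u := by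
    rw [hasDerivAt_pi]
    intro i
    have hcomp : (fun t => φ t i) = fun t => r t * y i
        + Real.sqrt (1 - r t ^ 2) * (if (i:ℕ) = n then Real.cos (θ t)
            else if (i:ℕ) = n + 1 then Real.sin (θ t) else 0) := by
      funext t
      rw [hφ t]
      simp [hB₂, smul_eq_mul]
    rw [hcomp]
    by_cases hin : (i:ℕ) = n
    · simp only [if_pos hin]
      have h2 := (hrdu.mul_const (y i)).fun_add (hsu.fun_mul hθu.cos)
      refine h2.congr_deriv ?_
      simp only [hB₂, hB₃, if_pos hin]
      ring
    · by_cases hin1 : (i:ℕ) = n + 1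
      · simp only [if_neg hin, if_pos hin1]
        have h2 := (hrdu.mul_const (y i)).fun_add (hsu.fun_mul hθu.sin)
        refine h2.congr_deriv ?_
        simp only [hB₂, hB₃, if_neg hin, if_pos hin1]
        ring
      · simp only [if_neg hin, if_neg hin1, mul_zero, add_zero]
        have h2 := hrdu.mul_const (y i)
        refine h2.congr_deriv ?_
        simp only [hB₂, hB₃, if_neg hin, if_neg hin1]
        ring
  have hνD : HasDerivAt ν (fun i =>
      (-(deriv r u * lam u + r u * deriv lam u)) * y i
      + (((2 * r u * deriv r u * lam u + r u ^ 2 * deriv lam u) * Real.sqrt (1 - r u ^ 2)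
          - r u ^ 2 * lam u * (-(r u * deriv r u) / Real.sqrt (1 - r u ^ 2))) / Real.sqrt (1 - r u ^ 2) ^ 2
         - (deriv r u / Real.sqrt (1 - r u ^ 2)) * (r u * lam u / (1 - r u ^ 2))) * B₂ (θ u) i
      + ((deriv (deriv r) u * Real.sqrt (1 - r u ^ 2) - deriv r u * (-(r u * deriv r u) / Real.sqrt (1 - r u ^ 2))) / Real.sqrt (1 - r u ^ 2) ^ 2
         + (r u ^ 2 * lam u / Real.sqrt (1 - r u ^ 2)) * (r u * lam u / (1 - r u ^ 2))) * B₃ (θ u) i) u := by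
    rw [hasDerivAt_pi]
    intro i
    have hcomp : (fun t => ν t i) = fun t => (-(r t * lam t)) * y i
        + (r t ^ 2 * lam t / Real.sqrt (1 - r t ^ 2)) * (if (i:ℕ) = n then Real.cos (θ t)
            else if (i:ℕ) = n + 1 then Real.sin (θ t) else 0)
        + (deriv r t / Real.sqrt (1 - r t ^ 2)) * (if (i:ℕ) = n then -Real.sin (θ t)
            else if (i:ℕ) = n + 1 then Real.cos (θ t) else 0) := by
      funext t
      rw [hν t]
      simp [hB₂, hB₃, smul_eq_mul]
    rw [hcomp]
    have hc1 : HasDerivAt (fun t => -(r t * lam t) * y i)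
        ((-(deriv r u * lam u + r u * deriv lam u)) * y i) u := by
      have h0 := ((hrdu.fun_mul hldu).fun_neg).mul_const (y i)
      convert h0 using 1; try ring
    have hc2 : HasDerivAt (fun t => r t ^ 2 * lam t / Real.sqrt (1 - r t ^ 2))
        (((2 * r u * deriv r u * lam u + r u ^ 2 * deriv lam u) * Real.sqrt (1 - r u ^ 2)
          - r u ^ 2 * lam u * (-(r u * deriv r u) / Real.sqrt (1 - r u ^ 2))) / Real.sqrt (1 - r u ^ 2) ^ 2) u := by
      have h0 := ((hrdu.fun_pow 2).fun_mul hldu).fun_div hsu hSne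
      refine h0.congr_deriv ?_
      push_cast
      ring
    have hc3 : HasDerivAt (fun t => deriv r t / Real.sqrt (1 - r t ^ 2))
        ((deriv (deriv r) u * Real.sqrt (1 - r u ^ 2) - deriv r u * (-(r u * deriv r u) / Real.sqrt (1 - r u ^ 2))) / Real.sqrt (1 - r u ^ 2) ^ 2) u :=
      hr''u.fun_div hsu hSne
    by_cases hin : (i:ℕ) = n
    · simp only [if_pos hin]
      have h2 := (hc1.fun_add (hc2.fun_mul hθu.cos)).fun_add (hc3.fun_mul (hθu.sin.fun_neg))
      refine h2.congr_deriv ?_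
      simp only [hB₂, hB₃, if_pos hin]
      ring
    · by_cases hin1 : (i:ℕ) = n + 1
      · simp only [if_neg hin, if_pos hin1]
        have h2 := (hc1.fun_add (hc2.fun_mul hθu.sin)).fun_add (hc3.fun_mul hθu.cos)
        refine h2.congr_deriv ?_
        simp only [hB₂, hB₃, if_neg hin, if_pos hin1]
        ring
      · simp only [if_neg hin, if_neg hin1, mul_zero, add_zero]
        have h2 := hc1
        refine h2.congr_deriv ?_
        simp only [hB₂, hB₃, if_neg hin, if_neg hin1]
        ring
  -- scalar identities
  have id1 : -(deriv r u * lam u + r u * deriv lam u)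
      = (-((n:ℝ) * h - ((n:ℝ) - 1) * lam u)) * deriv r u := by
    linear_combination (-1 : ℝ) * hrlu
  have id2 : ((2 * r u * deriv r u * lam u + r u ^ 2 * deriv lam u) * Real.sqrt (1 - r u ^ 2)
          - r u ^ 2 * lam u * (-(r u * deriv r u) / Real.sqrt (1 - r u ^ 2))) / Real.sqrt (1 - r u ^ 2) ^ 2
         - (deriv r u / Real.sqrt (1 - r u ^ 2)) * (r u * lam u / (1 - r u ^ 2))
      = (-((n:ℝ) * h - ((n:ℝ) - 1) * lam u)) * (-(r u * deriv r u) / Real.sqrt (1 - r u ^ 2)) := by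
    have hD : 1 - r u ^ 2 ≠ 0 := h1ru.ne'
    linear_combination (norm := skip) (r u / Real.sqrt (1 - r u ^ 2)) * hrlu - (r u ^ 3 * deriv r u * lam u / (Real.sqrt (1 - r u ^ 2) ^ 3 * (1 - r u ^ 2))) * hS2
    field_simp
    ring
  have id3 : (deriv (deriv r) u * Real.sqrt (1 - r u ^ 2) - deriv r u * (-(r u * deriv r u) / Real.sqrt (1 - r u ^ 2))) / Real.sqrt (1 - r u ^ 2) ^ 2
         + (r u ^ 2 * lam u / Real.sqrt (1 - r u ^ 2)) * (r u * lam u / (1 - r u ^ 2))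
      = (-((n:ℝ) * h - ((n:ℝ) - 1) * lam u)) * (Real.sqrt (1 - r u ^ 2) * (r u * lam u / (1 - r u ^ 2))) := by
    have hD : 1 - r u ^ 2 ≠ 0 := h1ru.ne'
    linear_combination (norm := skip) (1 / Real.sqrt (1 - r u ^ 2)) * hq + (r u / Real.sqrt (1 - r u ^ 2) ^ 3) * hode1 + (-(r u) / Real.sqrt (1 - r u ^ 2) ^ 3 + ((n:ℝ) * h - ((n:ℝ) - 1) * lam u) * r u * lam u / (Real.sqrt (1 - r u ^ 2) * (1 - r u ^ 2)) + r u ^ 3 * lam u ^ 2 / (Real.sqrt (1 - r u ^ 2) ^ 3 * (1 - r u ^ 2))) * hS2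
    field_simp
    ring
  refine ⟨?_, ?_, ?_, ?_, ?_, ?_⟩
  · rw [semiForm_key hkn y hy (Real.cos (θ u)) (Real.sin (θ u))
      (r u) (Real.sqrt (1 - r u ^ 2)) 0 (r u) (Real.sqrt (1 - r u ^ 2)) 0 hcs (φ u) (φ u)
      (fun i => by rw [hφ u]; simp only [Pi.add_apply, Pi.smul_apply, smul_eq_mul, hB₂, hB₃]; try ring)
      (fun i => by rw [hφ u]; simp only [Pi.add_apply, Pi.smul_apply, smul_eq_mul, hB₂, hB₃]; try ring),
      hyy]
    nlinarith [hS2]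
  · rw [hφD.deriv]
    rw [semiForm_key hkn y hy (Real.cos (θ u)) (Real.sin (θ u))
      (deriv r u) (-(r u * deriv r u) / Real.sqrt (1 - r u ^ 2)) (Real.sqrt (1 - r u ^ 2) * (r u * lam u / (1 - r u ^ 2)))
      (deriv r u) (-(r u * deriv r u) / Real.sqrt (1 - r u ^ 2)) (Real.sqrt (1 - r u ^ 2) * (r u * lam u / (1 - r u ^ 2))) hcs _ _
      (fun i => by simp only [hB₂, hB₃])
      (fun i => by simp only [hB₂, hB₃]), hyy]
    have hD : 1 - r u ^ 2 ≠ 0 := h1ru.ne'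
    linear_combination (norm := skip) (1 / (1 - r u ^ 2)) * hode1 + (-(r u ^ 2 * deriv r u ^ 2) / (Real.sqrt (1 - r u ^ 2) ^ 2 * (1 - r u ^ 2)) + r u ^ 2 * lam u ^ 2 / (1 - r u ^ 2) ^ 2) * hS2
    field_simp
    ring
  · rw [semiForm_key hkn y hy (Real.cos (θ u)) (Real.sin (θ u))
      (-(r u * lam u)) (r u ^ 2 * lam u / Real.sqrt (1 - r u ^ 2)) (deriv r u / Real.sqrt (1 - r u ^ 2))
      (-(r u * lam u)) (r u ^ 2 * lam u / Real.sqrt (1 - r u ^ 2)) (deriv r u / Real.sqrt (1 - r u ^ 2)) hcs (ν u) (ν u)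
      (fun i => by rw [hν u]; simp only [Pi.add_apply, Pi.smul_apply, smul_eq_mul, hB₂, hB₃]; try ring)
      (fun i => by rw [hν u]; simp only [Pi.add_apply, Pi.smul_apply, smul_eq_mul, hB₂, hB₃]; try ring),
      hyy]
    have hD : 1 - r u ^ 2 ≠ 0 := h1ru.ne'
    linear_combination (norm := skip) (1 / (1 - r u ^ 2)) * hode1 - ((r u ^ 4 * lam u ^ 2 + deriv r u ^ 2) / (Real.sqrt (1 - r u ^ 2) ^ 2 * (1 - r u ^ 2))) * hS2
    field_simp
    ring
  · rw [hφD.deriv]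
    rw [semiForm_key hkn y hy (Real.cos (θ u)) (Real.sin (θ u))
      (-(r u * lam u)) (r u ^ 2 * lam u / Real.sqrt (1 - r u ^ 2)) (deriv r u / Real.sqrt (1 - r u ^ 2))
      (deriv r u) (-(r u * deriv r u) / Real.sqrt (1 - r u ^ 2)) (Real.sqrt (1 - r u ^ 2) * (r u * lam u / (1 - r u ^ 2))) hcs (ν u) _
      (fun i => by rw [hν u]; simp only [Pi.add_apply, Pi.smul_apply, smul_eq_mul, hB₂, hB₃]; try ring)
      (fun i => by simp only [hB₂, hB₃]), hyy]
    have hD : 1 - r u ^ 2 ≠ 0 := h1ru.ne'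
    linear_combination (norm := skip) (r u ^ 3 * deriv r u * lam u / (Real.sqrt (1 - r u ^ 2) ^ 2 * (1 - r u ^ 2))) * hS2
    field_simp
    ring
  · intro v hv hvy
    exact semiForm_orth hkn y v hv hvy (Real.cos (θ u)) (Real.sin (θ u))
      (-(r u * lam u)) (r u ^ 2 * lam u / Real.sqrt (1 - r u ^ 2)) (deriv r u / Real.sqrt (1 - r u ^ 2)) (ν u)
      (fun i => by rw [hν u]; simp only [Pi.add_apply, Pi.smul_apply, smul_eq_mul, hB₂, hB₃]; try ring)
  · rw [hνD.deriv, hφD.deriv]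
    funext i
    simp only [Pi.smul_apply, smul_eq_mul]
    rw [id2, id3, id1]
    ring
end

section
/- Let $n\ge 2$ and $0\le k\le n$ be integers, $h\in\mathbb{R}$, $c>0$, and let $g:(a_1,a_2)\to\mathbb{R}$ be positive, differentiable with $g'(t)\ne 0$ and $(g'(t))^2 = c - g(t)^2\,(h+g(t)^{-n})^2$ for all $t$. Set $\lambda = h+g^{-n}$, $r = g/\sqrt{c}$, fix $t_0\in(a_1,a_2)$ and let $R(t)=\int_{t_0}^t r(\tau)\lambda(\tau)\,d\tau$. Let $e_{n+1}=(0,\dots,0,1)\in\mathbb{R}^{n+1}$. Then $(r')^2 + r^2\lambda^2 = 1$ on $(a_1,a_2)$, and for every $y\in\mathbb{R}^{n+1}$ with $y_{n+1}=0$ and $\langle y,y\rangle = 1$, the curves $\phi(u) = r(u)\,y + R(u)\,e_{n+1}$ and $\nu(u) = -r(u)\lambda(u)\,y + r'(u)\,e_{n+1}$ satisfy: $\langle\phi',\phi'\rangle\equiv 1$, $\langle\nu,\nu\rangle\equiv 1$, $\langle\nu,\phi'\rangle\equiv 0$, $\langle\nu(u),v\rangle = 0$ for every $v\in\mathbb{R}^{n+1}$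 with $v_{n+1}=0$ and $\langle v,y\rangle = 0$, and $\nu'(u) = -(nh-(n-1)\lambda(u))\,\phi'(u)$ for all $u$. -/
lemma semi_expand (n k : ℕ) (hkn : k ≤ n) (y e : Fin (n+1) → ℝ)
    (hy : ∀ i : Fin (n+1), (i:ℕ) = n → y i = 0)
    (he : ∀ i, e i = if (i:ℕ) = n then 1 else 0)
    (a b a' b' : ℝ) :
    semiForm k (a • y + b • e) (a' • y + b' • e) = a * a' * semiForm k y y + b * b' := by
  unfold semiForm
  rw [Fin.sum_univ_castSucc, Fin.sum_univ_castSucc]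
  have hyn : y (Fin.last n) = 0 := hy _ rfl
  have hen : e (Fin.last n) = 1 := by rw [he]; simp
  have hkey : ∀ i : Fin n, e i.castSucc = 0 := by
    intro i; rw [he]; simp [Fin.coe_castSucc, (i.isLt.ne : (i:ℕ) ≠ n)]
  have h1 : ∀ i : Fin n,
      (if ((i.castSucc : Fin (n+1)) : ℕ) < k then (-1:ℝ) else 1) *
        ((a • y + b • e) i.castSucc) * ((a' • y + b' • e) i.castSucc)
      = a * a' * ((if ((i.castSucc : Fin (n+1)) : ℕ) < k then (-1:ℝ) else 1) *
        y i.castSucc * y i.castSucc) := by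
    intro i
    simp only [Pi.add_apply, Pi.smul_apply, smul_eq_mul, hkey i]
    ring
  rw [Finset.sum_congr rfl (fun i _ => h1 i), ← Finset.mul_sum]
  have hlk : ¬ ((Fin.last n : Fin (n+1)) : ℕ) < k := by simp [Fin.val_last]; omega
  simp only [Pi.add_apply, Pi.smul_apply, smul_eq_mul, hyn, hen, if_neg hlk]
  ring

lemma semi_orth (n k : ℕ) (y e v : Fin (n+1) → ℝ)
    (hv : ∀ i : Fin (n+1), (i:ℕ) = n → v i = 0)
    (he : ∀ i, e i = if (i:ℕ) = n then 1 else 0)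
    (a b : ℝ) :
    semiForm k (a • y + b • e) v = a * semiForm k y v := by
  unfold semiForm
  rw [Fin.sum_univ_castSucc, Fin.sum_univ_castSucc]
  have hvn : v (Fin.last n) = 0 := hv _ rfl
  have hkey : ∀ i : Fin n, e i.castSucc = 0 := by
    intro i; rw [he]; simp [Fin.coe_castSucc, (i.isLt.ne : (i:ℕ) ≠ n)]
  have h1 : ∀ i : Fin n,
      (if ((i.castSucc : Fin (n+1)) : ℕ) < k then (-1:ℝ) else 1) *
        ((a • y + b • e) i.castSucc) * (v i.castSucc)
      = a * ((if ((i.castSucc : Fin (n+1)) : ℕ) < k then (-1:ℝ) else 1) *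
        y i.castSucc * v i.castSucc) := by
    intro i
    simp only [Pi.add_apply, Pi.smul_apply, smul_eq_mul, hkey i]
    ring
  rw [Finset.sum_congr rfl (fun i _ => h1 i), ← Finset.mul_sum]
  simp [hvn]
lemma scalar_facts (n : ℕ) (h c a₁ a₂ : ℝ)
    (g lam : ℝ → ℝ)
    (hgdiff : ∀ t ∈ Set.Ioo a₁ a₂, DifferentiableAt ℝ g t)
    (hgpos : ∀ t ∈ Set.Ioo a₁ a₂, 0 < g t)
    (hg' : ∀ t ∈ Set.Ioo a₁ a₂, deriv g t ≠ 0)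
    (hode : ∀ t ∈ Set.Ioo a₁ a₂,
      deriv g t ^ 2 = c - g t ^ 2 * (h + g t ^ (-(n : ℤ))) ^ 2)
    (hlam : ∀ t, lam t = h + g t ^ (-(n : ℤ))) :
    ∀ u ∈ Set.Ioo a₁ a₂,
      HasDerivAt lam (-(n:ℝ) * g u ^ (-(n:ℤ)-1) * deriv g u) u ∧
      HasDerivAt (deriv g)
        (-((((n:ℝ)) * h - ((n:ℝ) - 1) * lam u) * (g u * lam u))) u := by
  have hsopen : IsOpen (Set.Ioo a₁ a₂) := isOpen_Ioo
  -- lam derivative, as an auxiliary function of u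
  have hlamd : ∀ u ∈ Set.Ioo a₁ a₂,
      HasDerivAt lam (-(n:ℝ) * g u ^ (-(n:ℤ)-1) * deriv g u) u := by
    intro u hu
    have hgd := (hgdiff u hu).hasDerivAt
    have hz := (hasDerivAt_zpow (-(n:ℤ)) (g u) (Or.inl (hgpos u hu).ne')).comp u hgd
    have heq : lam = fun t => h + g t ^ (-(n:ℤ)) := funext hlam
    rw [heq]
    simpa [Function.comp, mul_comm, mul_assoc, mul_left_comm] using hz.const_add h
  -- rewrite the ODE in terms of lam
  have hode' : ∀ t ∈ Set.Ioo a₁ a₂, deriv g t ^ 2 = c - g t ^ 2 * lam t ^ 2 := by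
    intro t ht; rw [hlam t]; exact hode t ht
  -- Darboux: constant sign of deriv g
  have hsign : ∃ σ : ℝ, (σ = 1 ∨ σ = -1) ∧
      ∀ t ∈ Set.Ioo a₁ a₂, deriv g t = σ * Real.sqrt (c - g t ^ 2 * lam t ^ 2) := by
    have hsq : ∀ t ∈ Set.Ioo a₁ a₂,
        Real.sqrt (c - g t ^ 2 * lam t ^ 2) = |deriv g t| := by
      intro t ht; rw [← hode' t ht, Real.sqrt_sq_eq_abs]
    rcases hasDerivWithinAt_forall_lt_or_forall_gt_of_forall_ne (convex_Ioo a₁ a₂)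
        (fun x hx => ((hgdiff x hx).hasDerivAt).hasDerivWithinAt) (m := 0) hg' with hneg | hpos
    · exact ⟨-1, Or.inr rfl, fun t ht => by
        rw [hsq t ht, abs_of_neg (hneg t ht)]; ring⟩
    · exact ⟨1, Or.inl rfl, fun t ht => by
        rw [hsq t ht, abs_of_pos (hpos t ht)]; ring⟩
  obtain ⟨σ, hσ1, hσ⟩ := hsign
  intro u hu
  refine ⟨hlamd u hu, ?_⟩
  have hgd := (hgdiff u hu).hasDerivAt
  have hgne : g u ≠ 0 := (hgpos u hu).ne'
  have hg'ne := hg' u hu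
  have hσne : σ ≠ 0 := by rcases hσ1 with rfl | rfl <;> norm_num
  have hσsq : σ * σ = 1 := by rcases hσ1 with rfl | rfl <;> norm_num
  set Qu := c - g u ^ 2 * lam u ^ 2 with hQu
  have hQpos : 0 < Qu := by
    rw [hQu, ← hode' u hu]
    exact lt_of_le_of_ne (sq_nonneg _) (Ne.symm (pow_ne_zero 2 hg'ne))
  have hQd := ((hgd.pow 2).mul ((hlamd u hu).pow 2)).const_sub c
  have hsqrt := (hQd.sqrt hQpos.ne').const_mul σ
  have heq : deriv g =ᶠ[nhds u] fun t => σ * Real.sqrt (c - g t ^ 2 * lam t ^ 2) :=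
    Filter.eventuallyEq_of_mem (hsopen.mem_nhds hu) (fun t ht => hσ t ht)
  have hg'' := hsqrt.congr_of_eventuallyEq heq
  have hsqrtval : Real.sqrt Qu = σ * deriv g u := by
    have h1 := hσ u hu
    have : σ * deriv g u = σ * σ * Real.sqrt Qu := by rw [h1]; ring
    rw [this, hσsq, one_mul]
  -- now convert the derivative value
  have hzn : g u ^ (-(n:ℤ)) = (g u ^ n)⁻¹ := by
    rw [zpow_neg, zpow_natCast]
  have hzn1 : g u ^ (-(n:ℤ) - 1) = (g u ^ (n+1))⁻¹ := by
    rw [show (-(n:ℤ) - 1 : ℤ) = -((n+1 : ℕ) : ℤ) by push_cast; ring, zpow_neg, zpow_natCast]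
  have hlamu : lam u = h + (g u ^ n)⁻¹ := by rw [hlam u, hzn]
  have hpn : g u ^ n ≠ 0 := pow_ne_zero _ hgne
  have hpn1 : g u ^ (n+1) ≠ 0 := pow_ne_zero _ hgne
  refine hg''.congr_deriv (Eq.symm ?_)
  simp only [Pi.mul_apply, Pi.pow_apply]
  rw [← hQu]
  rw [hsqrtval, hzn1, hlamu]
  rw [pow_succ (g u) n]
  generalize g u ^ n = G at hpn ⊢
  rcases hσ1 with rfl | rfl <;>
  · field_simp
    linear_combination (-(2 * (n:ℝ) * g u * (h * G + 1))) * (mul_inv_cancel₀ hpn)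


/-- Theorem 2.20 of the paper (first family of cmc hypersurfaces of `ℝ_k^{n+1}`).
Coordinate `n+1` of the paper (1-indexed) is index `n` here. -/
theorem stmt_8 (n k : ℕ) (hn : 2 ≤ n) (hkn : k ≤ n)
    (h c a₁ a₂ t₀ : ℝ) (hc : 0 < c) (ht₀ : t₀ ∈ Set.Ioo a₁ a₂)
    (g lam r R : ℝ → ℝ)
    (hgdiff : ∀ t ∈ Set.Ioo a₁ a₂, DifferentiableAt ℝ g t)
    (hgpos : ∀ t ∈ Set.Ioo a₁ a₂, 0 < g t)
    (hg' : ∀ t ∈ Set.Ioo a₁ a₂, deriv g t ≠ 0)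
    (hode : ∀ t ∈ Set.Ioo a₁ a₂,
      deriv g t ^ 2 = c - g t ^ 2 * (h + g t ^ (-(n : ℤ))) ^ 2)
    (hlam : ∀ t, lam t = h + g t ^ (-(n : ℤ)))
    (hr : ∀ t, r t = g t / Real.sqrt c)
    (hR : ∀ t, R t = ∫ τ in t₀..t, r τ * lam τ)
    (e : Fin (n + 1) → ℝ)
    (he : ∀ i, e i = if (i : ℕ) = n then 1 else 0) :
    (∀ t ∈ Set.Ioo a₁ a₂, deriv r t ^ 2 + r t ^ 2 * lam t ^ 2 = 1) ∧
    ∀ y : Fin (n + 1) → ℝ,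
      (∀ i : Fin (n + 1), (i : ℕ) = n → y i = 0) →
      semiForm k y y = 1 →
      ∀ φ ν : ℝ → Fin (n + 1) → ℝ,
        (∀ u, φ u = r u • y + R u • e) →
        (∀ u, ν u = (-(r u * lam u)) • y + deriv r u • e) →
        ∀ u ∈ Set.Ioo a₁ a₂,
          semiForm k (deriv φ u) (deriv φ u) = 1 ∧
          semiForm k (ν u) (ν u) = 1 ∧
          semiForm k (ν u) (deriv φ u) = 0 ∧
          (∀ v : Fin (n + 1) → ℝ,
            (∀ i : Fin (n + 1), (i : ℕ) = n → v i = 0) →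
            semiForm k v y = 0 → semiForm k (ν u) v = 0) ∧
          deriv ν u = (-((n : ℝ) * h - ((n : ℝ) - 1) * lam u)) • deriv φ u := by
  have hsopen : IsOpen (Set.Ioo a₁ a₂) := isOpen_Ioo
  have hscne : Real.sqrt c ≠ 0 := (Real.sqrt_pos.2 hc).ne'
  have hcs : Real.sqrt c ^ 2 = c := Real.sq_sqrt hc.le
  have hreq : r = fun t => g t / Real.sqrt c := funext hr
  have hderivr : deriv r = fun t => deriv g t / Real.sqrt c := by
    funext t; rw [hreq]; exact deriv_div_const _
  have part1 : ∀ t ∈ Set.Ioo a₁ a₂, deriv r t ^ 2 + r t ^ 2 * lam t ^ 2 = 1 := by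
    intro t ht
    have hode'' : deriv g t ^ 2 = c - g t ^ 2 * lam t ^ 2 := by
      rw [hlam]; exact hode t ht
    rw [hderivr, hreq]
    simp only
    rw [div_pow, div_pow, hcs, hode'']
    field_simp
    ring
  have hsf := scalar_facts n h c a₁ a₂ g lam hgdiff hgpos hg' hode hlam
  refine ⟨part1, ?_⟩
  intro y hy hyy φ ν hφ hν u hu
  obtain ⟨hlamd, hg''⟩ := hsf u hu
  have hgne : g u ≠ 0 := (hgpos u hu).ne'
  have hg'ne := hg' u hu
  have hgd := (hgdiff u hu).hasDerivAt
  have hrd : HasDerivAt r (deriv r u) u := by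
    rw [hderivr]; simp only; rw [hreq]; exact hgd.div_const _
  -- continuity of r * lam on the interval
  have hcont : ∀ t ∈ Set.Ioo a₁ a₂, ContinuousAt (fun τ => r τ * lam τ) t := by
    intro t ht
    have hg_c : ContinuousAt g t := (hgdiff t ht).continuousAt
    have hlamc : ContinuousAt lam t := by
      rw [funext hlam]
      exact continuousAt_const.add (hg_c.zpow₀ _ (Or.inl (hgpos t ht).ne'))
    have hrc : ContinuousAt r t := by rw [hreq]; exact hg_c.div_const _
    exact hrc.mul hlamc
  have hRd : HasDerivAt R (r u * lam u) u := by
    rw [funext hR]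
    refine intervalIntegral.integral_hasDerivAt_right ?_ ?_ (hcont u hu)
    · apply ContinuousOn.intervalIntegrable
      intro t ht
      exact (hcont t ((Set.ordConnected_Ioo.uIcc_subset ht₀ hu) ht)).continuousWithinAt
    · exact ContinuousAt.stronglyMeasurableAtFilter hsopen hcont u hu
  have hφd : HasDerivAt φ (deriv r u • y + (r u * lam u) • e) u := by
    rw [funext hφ]
    exact (hrd.smul_const y).add (hRd.smul_const e)
  have hφval : deriv φ u = deriv r u • y + (r u * lam u) • e := hφd.deriv
  -- zpow rewrites
  have hzn : g u ^ (-(n:ℤ)) = (g u ^ n)⁻¹ := by rw [zpow_neg, zpow_natCast]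
  have hzn1 : g u ^ (-(n:ℤ) - 1) = (g u ^ (n+1))⁻¹ := by
    rw [show (-(n:ℤ) - 1 : ℤ) = -((n+1 : ℕ) : ℤ) by push_cast; ring, zpow_neg, zpow_natCast]
  have hlamu : lam u = h + (g u ^ n)⁻¹ := by rw [hlam u, hzn]
  have hpn : g u ^ n ≠ 0 := pow_ne_zero _ hgne
  have hpn1 : g u ^ (n+1) ≠ 0 := pow_ne_zero _ hgne
  set μ := (n : ℝ) * h - ((n : ℝ) - 1) * lam u with hμ
  have hrval : deriv r u = deriv g u / Real.sqrt c := by rw [hderivr]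
  -- derivative of r * lam
  have hrl : HasDerivAt (fun t => r t * lam t) (μ * deriv r u) u := by
    have := hrd.mul hlamd
    refine this.congr_deriv (Eq.symm ?_)
    rw [hμ, hrval, hr u, hlamu, hzn1]
    field_simp
    ring
  -- second derivative of r
  have hr2 : HasDerivAt (deriv r) (-(μ * (r u * lam u))) u := by
    rw [hderivr]
    have := hg''.div_const (Real.sqrt c)
    refine this.congr_deriv (Eq.symm ?_)
    rw [hμ, hr u]
    field_simp
  have hνd : HasDerivAt ν ((-(μ * deriv r u)) • y + (-(μ * (r u * lam u))) • e) u := by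
    rw [funext hν]
    have h1 : HasDerivAt (fun t => -(r t * lam t)) (-(μ * deriv r u)) u := hrl.neg
    exact (h1.smul_const y).add (hr2.smul_const e)
  have hνval : deriv ν u = (-(μ * deriv r u)) • y + (-(μ * (r u * lam u))) • e := hνd.deriv
  have h1 := part1 u hu
  refine ⟨?_, ?_, ?_, ?_, ?_⟩
  · rw [hφval, semi_expand n k hkn y e hy he, hyy]
    linear_combination h1
  · rw [hν u, semi_expand n k hkn y e hy he, hyy]
    linear_combination h1
  · rw [hν u, hφval, semi_expand n k hkn y e hy he, hyy]
    ring
  · intro v hv hvy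
    rw [hν u, semi_orth n k y e v hv he, semiForm_comm k (n+1) y v, hvy, mul_zero]
  · rw [hνval, hφval]
    funext i
    simp only [Pi.add_apply, Pi.smul_apply, smul_eq_mul, neg_mul]
    ring
end
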